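/- arXiv:1806.10790 — 2 statements merged into one kernel-verified Lean document; each statement's English description precedes it below -/
import Mathlib

section
/- Let A be an m×n real matrix whose columns have ℓ2-norm 1, let s ≥ 1, a ≥ 1 and b be integers with 1 ≤ b ≤ 4a and s + a + b − 1 ≤ n − 1, and let τ > 0. Assume μ₁(A, s+a−1) + τ·√(s/b)·μ₁(A, s+a+b−1) < 1. Then for every x ∈ ℝ^n and every index set S ⊆ {1,…,n} with |S| ≤ s and ‖x_{S^c}‖₁ ≤ τ‖x_S‖₁, one has ‖Ax‖₂ ≥ [ (1 − μ₁(A,s+a−1) − τ√(s/b)·μ₁(A,s+a+b−1)) / √(1 + μ₁(A,s+a−1)) ]·‖x_S‖₂. In particular A satisfies the restricted eigenvalue condition of order s and τ with K(s,τ,A) ≥ (1 − μ₁(A,s+a−1) − τ√(s/b)·μ₁(A,s+a+b−1)) / √(1 + μ₁(A,s+a−1)). -/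
open scoped Classical

/-- Cumulative coherence function μ₁(A, s). -/
noncomputable def mu1 {m n : ℕ} (A : Matrix (Fin m) (Fin n) ℝ) (s : ℕ) : ℝ :=
  sSup {t : ℝ | ∃ S : Finset (Fin n), S.card ≤ s ∧ ∃ i : Fin n, i ∉ S ∧
    t = ∑ j ∈ S, |∑ k : Fin m, A k i * A k j|}

section helper

lemma mu1_set_finite {m n : ℕ} (A : Matrix (Fin m) (Fin n) ℝ) (s : ℕ) :
    ({t : ℝ | ∃ S : Finset (Fin n), S.card ≤ s ∧ ∃ i : Fin n, i ∉ S ∧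
    t = ∑ j ∈ S, |∑ k : Fin m, A k i * A k j|}).Finite := by
  have : {t : ℝ | ∃ S : Finset (Fin n), S.card ≤ s ∧ ∃ i : Fin n, i ∉ S ∧
      t = ∑ j ∈ S, |∑ k : Fin m, A k i * A k j|} ⊆
      (fun p : Finset (Fin n) × Fin n => ∑ j ∈ p.1, |∑ k : Fin m, A k p.2 * A k j|) ''
        Set.univ := by
    rintro t ⟨S, _, i, _, rfl⟩
    exact ⟨(S, i), Set.mem_univ _, rfl⟩
  exact Set.Finite.subset (Set.finite_univ.image _) this

lemma le_mu1 {m n : ℕ} (A : Matrix (Fin m) (Fin n) ℝ) {s : ℕ} {T : Finset (Fin n)} {i : Fin n}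
    (hT : T.card ≤ s) (hi : i ∉ T) :
    ∑ j ∈ T, |∑ k : Fin m, A k i * A k j| ≤ mu1 A s :=
  le_csSup (mu1_set_finite A s).bddAbove ⟨T, hT, i, hi, rfl⟩

lemma mu1_nonneg {m n : ℕ} (A : Matrix (Fin m) (Fin n) ℝ) (s : ℕ) (hn : 0 < n) :
    0 ≤ mu1 A s := by
  have := le_mu1 A (s := s) (T := (∅ : Finset (Fin n))) (i := ⟨0, hn⟩)
    (by simp) (by simp)
  simpa using this

lemma dot_mulVec {m n : ℕ} (A : Matrix (Fin m) (Fin n) ℝ) (u v : Fin n → ℝ) :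
    ∑ k, A.mulVec u k * A.mulVec v k
      = ∑ i, ∑ j, u i * v j * (∑ k, A k i * A k j) := by
  simp only [Matrix.mulVec, dotProduct, Finset.sum_mul, Finset.mul_sum]
  rw [Finset.sum_comm]
  conv_rhs => rw [Finset.sum_comm]
  refine Finset.sum_congr rfl fun j _ => ?_
  rw [Finset.sum_comm]
  refine Finset.sum_congr rfl fun i _ => Finset.sum_congr rfl fun k _ => by ring

lemma gsymm {m n : ℕ} (A : Matrix (Fin m) (Fin n) ℝ) (i j : Fin n) :
    |∑ k, A k i * A k j| = |∑ k, A k j * A k i| := by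
  congr 1; exact Finset.sum_congr rfl fun k _ => mul_comm _ _

lemma quadform_bound {m n : ℕ} (A : Matrix (Fin m) (Fin n) ℝ)
    (hA : ∀ j, ∑ k, (A k j) ^ 2 = 1) (t : ℕ) (U : Finset (Fin n)) (hU : U.card ≤ t + 1)
    (u : Fin n → ℝ) (hu : ∀ j, j ∉ U → u j = 0) :
    |(∑ i, ∑ j, u i * u j * (∑ k, A k i * A k j)) - ∑ i, u i ^ 2|
      ≤ mu1 A t * ∑ i, u i ^ 2 := by
  set G : Fin n → Fin n → ℝ := fun i j => ∑ k, A k i * A k j with hG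
  have hGsym : ∀ i j, |G i j| = |G j i| := fun i j => gsymm A i j
  have hGd : ∀ i, G i i = 1 := by
    intro i
    have : (∑ k, A k i * A k i) = ∑ k, A k i ^ 2 :=
      Finset.sum_congr rfl fun k _ => (sq (A k i)).symm
    rw [hG]; simpa [this] using hA i
  have hrestr : (∑ i, ∑ j, u i * u j * G i j) = ∑ i ∈ U, ∑ j ∈ U, u i * u j * G i j := by
    rw [← Finset.sum_subset (Finset.subset_univ U) (fun i _ hi => ?_)]
    · exact Finset.sum_congr rfl fun i _ =>
        (Finset.sum_subset (Finset.subset_univ U) (fun j _ hj => by simp [hu j hj])).symm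
    · simp [hu i hi]
  have hsq : (∑ i, u i ^ 2) = ∑ i ∈ U, u i ^ 2 := by
    rw [← Finset.sum_subset (Finset.subset_univ U) (fun i _ hi => by simp [hu i hi])]
  have hsplit : ∀ i ∈ U, (∑ j ∈ U, u i * u j * G i j)
      = u i ^ 2 + ∑ j ∈ U, (if i = j then 0 else u i * u j * G i j) := by
    intro i hi
    have h1 : (∑ j ∈ U, u i * u j * G i j)
        = (∑ j ∈ U, (if i = j then u i * u j * G i j else 0))
          + ∑ j ∈ U, (if i = j then 0 else u i * u j * G i j) := by
      rw [← Finset.sum_add_distrib]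
      exact Finset.sum_congr rfl fun j _ => by split_ifs <;> ring
    rw [h1, Finset.sum_ite_eq U i (fun j => u i * u j * G i j), if_pos hi, hGd i]
    ring
  set off : ℝ := ∑ i ∈ U, ∑ j ∈ U, (if i = j then 0 else u i * u j * G i j) with hoff
  have hmain : (∑ i, ∑ j, u i * u j * G i j) - (∑ i, u i ^ 2) = off := by
    rw [hrestr, hsq, Finset.sum_congr rfl hsplit, Finset.sum_add_distrib]
    ring
  rw [hmain, hsq]
  have hinner : ∀ i ∈ U, (∑ j ∈ U, (if i = j then 0 else |G i j|)) ≤ mu1 A t := by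
    intro i hi
    have hzero : (if i = i then (0:ℝ) else |G i i|) = 0 := by simp
    rw [← Finset.sum_erase U hzero]
    have he : ∑ j ∈ U.erase i, (if i = j then 0 else |G i j|) = ∑ j ∈ U.erase i, |G i j| :=
      Finset.sum_congr rfl fun j hj =>
        if_neg (fun h => (Finset.ne_of_mem_erase hj) h.symm)
    rw [he]
    refine le_mu1 A ?_ (Finset.notMem_erase i U)
    have := Finset.card_erase_of_mem hi
    omega
  have habs : |off| ≤ ∑ i ∈ U, ∑ j ∈ U, (if i = j then 0 else |u i| * |u j| * |G i j|) := by
    refine (Finset.abs_sum_le_sum_abs _ _).trans ?_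
    refine Finset.sum_le_sum fun i _ => ?_
    refine (Finset.abs_sum_le_sum_abs _ _).trans ?_
    refine Finset.sum_le_sum fun j _ => ?_
    split_ifs with h
    · simp
    · rw [abs_mul, abs_mul]
  have hsym : ∑ i ∈ U, ∑ j ∈ U, (if i = j then 0 else |u i| * |u j| * |G i j|)
      ≤ ∑ i ∈ U, ∑ j ∈ U, (if i = j then 0 else (u i ^ 2 / 2 + u j ^ 2 / 2) * |G i j|) := by
    refine Finset.sum_le_sum fun i _ => Finset.sum_le_sum fun j _ => ?_
    split_ifs with h
    · exact le_refl 0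
    · have h1 : |u i| * |u j| ≤ u i ^ 2 / 2 + u j ^ 2 / 2 := by
        nlinarith [sq_nonneg (|u i| - |u j|), sq_abs (u i), sq_abs (u j)]
      exact mul_le_mul_of_nonneg_right h1 (abs_nonneg _)
  have hsplit2 : ∑ i ∈ U, ∑ j ∈ U, (if i = j then 0 else (u i ^ 2 / 2 + u j ^ 2 / 2) * |G i j|)
      = (∑ i ∈ U, ∑ j ∈ U, (if i = j then 0 else u i ^ 2 / 2 * |G i j|))
        + ∑ i ∈ U, ∑ j ∈ U, (if i = j then 0 else u j ^ 2 / 2 * |G i j|) := by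
    rw [← Finset.sum_add_distrib]
    refine Finset.sum_congr rfl fun i _ => ?_
    rw [← Finset.sum_add_distrib]
    exact Finset.sum_congr rfl fun j _ => by split_ifs <;> ring
  have hSa : ∀ (w : Fin n → ℝ),
      (∑ i ∈ U, ∑ j ∈ U, (if i = j then 0 else w i ^ 2 / 2 * |G i j|))
        ≤ ∑ i ∈ U, w i ^ 2 / 2 * mu1 A t := by
    intro w
    refine Finset.sum_le_sum fun i hi => ?_
    have h2 : (∑ j ∈ U, (if i = j then 0 else w i ^ 2 / 2 * |G i j|))
        = w i ^ 2 / 2 * ∑ j ∈ U, (if i = j then 0 else |G i j|) := by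
      rw [Finset.mul_sum]
      exact Finset.sum_congr rfl fun j _ => by split_ifs <;> ring
    rw [h2]
    exact mul_le_mul_of_nonneg_left (hinner i hi) (by positivity)
  have hSb : (∑ i ∈ U, ∑ j ∈ U, (if i = j then 0 else u j ^ 2 / 2 * |G i j|))
      ≤ ∑ i ∈ U, u i ^ 2 / 2 * mu1 A t := by
    rw [Finset.sum_comm]
    refine le_trans (le_of_eq ?_) (hSa u)
    refine Finset.sum_congr rfl fun j _ => Finset.sum_congr rfl fun i _ => ?_
    by_cases h : i = j
    · simp [h]
    · rw [if_neg h, if_neg (fun hji => h hji.symm), hGsym i j]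
  calc |off| ≤ _ := habs
    _ ≤ _ := hsym
    _ = _ := hsplit2
    _ ≤ (∑ i ∈ U, u i ^ 2 / 2 * mu1 A t) + ∑ i ∈ U, u i ^ 2 / 2 * mu1 A t :=
        add_le_add (hSa u) hSb
    _ = mu1 A t * ∑ i ∈ U, u i ^ 2 := by
        rw [← Finset.sum_add_distrib, Finset.mul_sum]
        exact Finset.sum_congr rfl fun i _ => by ring

set_option maxHeartbeats 1000000 in
lemma cross_bound {m n : ℕ} (A : Matrix (Fin m) (Fin n) ℝ) (hn : 0 < n) (K : ℕ)
    (U V : Finset (Fin n)) (hUV : Disjoint U V) (hU : U.card ≤ K) (hV : V.card ≤ K)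
    (u v : Fin n → ℝ) (hu : ∀ j, j ∉ U → u j = 0) (hv : ∀ j, j ∉ V → v j = 0) :
    |∑ i, ∑ j, u i * v j * (∑ k, A k i * A k j)|
      ≤ mu1 A K * (Real.sqrt (∑ i, u i ^ 2) * Real.sqrt (∑ j, v j ^ 2)) := by
  set G : Fin n → Fin n → ℝ := fun i j => ∑ k, A k i * A k j with hG
  have hGsym : ∀ i j, |G i j| = |G j i| := fun i j => gsymm A i j
  have hμ : 0 ≤ mu1 A K := mu1_nonneg A K hn
  set Su := ∑ i, u i ^ 2 with hSu
  set Sv := ∑ j, v j ^ 2 with hSv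
  have hSu0 : 0 ≤ Su := Finset.sum_nonneg fun i _ => sq_nonneg _
  have hSv0 : 0 ≤ Sv := Finset.sum_nonneg fun i _ => sq_nonneg _
  have hrestr : (∑ i, ∑ j, u i * v j * G i j) = ∑ i ∈ U, ∑ j ∈ V, u i * v j * G i j := by
    rw [← Finset.sum_subset (Finset.subset_univ U) (fun i _ hi => ?_)]
    · exact Finset.sum_congr rfl fun i _ =>
        (Finset.sum_subset (Finset.subset_univ V) (fun j _ hj => by simp [hv j hj])).symm
    · simp [hu i hi]
  rw [hrestr]
  by_cases hSuz : Su = 0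
  · have hz : ∀ i, u i = 0 := by
      intro i
      have h2 := (Finset.sum_eq_zero_iff_of_nonneg (fun i (_ : i ∈ Finset.univ) => sq_nonneg (u i))).mp hSuz i (Finset.mem_univ i)
      exact pow_eq_zero_iff (n := 2) (by norm_num) |>.mp h2
    have : (∑ i ∈ U, ∑ j ∈ V, u i * v j * G i j) = 0 :=
      Finset.sum_eq_zero fun i _ => Finset.sum_eq_zero fun j _ => by rw [hz i]; ring
    rw [this, abs_zero]
    positivity
  by_cases hSvz : Sv = 0
  · have hz : ∀ j, v j = 0 := by
      intro j
      have h2 := (Finset.sum_eq_zero_iff_of_nonneg (fun i (_ : i ∈ Finset.univ) => sq_nonneg (v i))).mp hSvz j (Finset.mem_univ j)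
      exact pow_eq_zero_iff (n := 2) (by norm_num) |>.mp h2
    have : (∑ i ∈ U, ∑ j ∈ V, u i * v j * G i j) = 0 :=
      Finset.sum_eq_zero fun i _ => Finset.sum_eq_zero fun j _ => by rw [hz j]; ring
    rw [this, abs_zero]
    positivity
  have hSup : 0 < Su := lt_of_le_of_ne hSu0 (Ne.symm hSuz)
  have hSvp : 0 < Sv := lt_of_le_of_ne hSv0 (Ne.symm hSvz)
  set p := Real.sqrt Su with hp
  set q := Real.sqrt Sv with hq
  have hpp : 0 < p := Real.sqrt_pos.mpr hSup
  have hqp : 0 < q := Real.sqrt_pos.mpr hSvp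
  have hp2 : p ^ 2 = Su := Real.sq_sqrt hSu0
  have hq2 : q ^ 2 = Sv := Real.sq_sqrt hSv0
  clear_value p q
  have hpt : ∀ x y : ℝ, |x| * |y| ≤ (q / p * x ^ 2 + p / q * y ^ 2) / 2 := by
    intro x y
    have key : 0 ≤ q ^ 2 * x ^ 2 + p ^ 2 * y ^ 2 - 2 * (p * q) * (|x| * |y|) := by
      nlinarith [sq_nonneg (q * |x| - p * |y|), sq_abs x, sq_abs y, abs_nonneg x, abs_nonneg y]
    have h2pq : (0:ℝ) < 2 * (p * q) := by positivity
    have heq : (q / p * x ^ 2 + p / q * y ^ 2) / 2 - |x| * |y|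
        = (q ^ 2 * x ^ 2 + p ^ 2 * y ^ 2 - 2 * (p * q) * (|x| * |y|)) / (2 * (p * q)) := by
      field_simp
    have := div_nonneg key h2pq.le
    linarith [heq ▸ this]
  have habs : |∑ i ∈ U, ∑ j ∈ V, u i * v j * G i j|
      ≤ ∑ i ∈ U, ∑ j ∈ V, (q / p * u i ^ 2 + p / q * v j ^ 2) / 2 * |G i j| := by
    refine (Finset.abs_sum_le_sum_abs _ _).trans ?_
    refine Finset.sum_le_sum fun i _ => ?_
    refine (Finset.abs_sum_le_sum_abs _ _).trans ?_
    refine Finset.sum_le_sum fun j _ => ?_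
    rw [abs_mul, abs_mul]
    exact mul_le_mul_of_nonneg_right (hpt (u i) (v j)) (abs_nonneg _)
  have hsplit : ∑ i ∈ U, ∑ j ∈ V, (q / p * u i ^ 2 + p / q * v j ^ 2) / 2 * |G i j|
      = (∑ i ∈ U, q / p * u i ^ 2 / 2 * ∑ j ∈ V, |G i j|)
        + ∑ j ∈ V, p / q * v j ^ 2 / 2 * ∑ i ∈ U, |G i j| := by
    have e1 : ∑ i ∈ U, ∑ j ∈ V, (q / p * u i ^ 2 + p / q * v j ^ 2) / 2 * |G i j|
        = (∑ i ∈ U, ∑ j ∈ V, q / p * u i ^ 2 / 2 * |G i j|)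
          + ∑ i ∈ U, ∑ j ∈ V, p / q * v j ^ 2 / 2 * |G i j| := by
      rw [← Finset.sum_add_distrib]
      refine Finset.sum_congr rfl fun i _ => ?_
      rw [← Finset.sum_add_distrib]
      exact Finset.sum_congr rfl fun j _ => by ring
    have e2 : (∑ i ∈ U, ∑ j ∈ V, q / p * u i ^ 2 / 2 * |G i j|)
        = ∑ i ∈ U, q / p * u i ^ 2 / 2 * ∑ j ∈ V, |G i j| :=
      Finset.sum_congr rfl fun i _ => by rw [Finset.mul_sum]
    have e3 : (∑ i ∈ U, ∑ j ∈ V, p / q * v j ^ 2 / 2 * |G i j|)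
        = ∑ j ∈ V, p / q * v j ^ 2 / 2 * ∑ i ∈ U, |G i j| := by
      rw [Finset.sum_comm]
      exact Finset.sum_congr rfl fun j _ => by rw [Finset.mul_sum]
    rw [e1, e2, e3]
  have hrow : ∀ i ∈ U, (∑ j ∈ V, |G i j|) ≤ mu1 A K := by
    intro i hi
    exact le_mu1 A hV (Finset.disjoint_left.mp hUV hi)
  have hcol : ∀ j ∈ V, (∑ i ∈ U, |G i j|) ≤ mu1 A K := by
    intro j hj
    have : (∑ i ∈ U, |G i j|) = ∑ i ∈ U, |G j i| :=
      Finset.sum_congr rfl fun i _ => hGsym i j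
    rw [this]
    exact le_mu1 A hU (Finset.disjoint_right.mp hUV hj)
  have h1 : (∑ i ∈ U, q / p * u i ^ 2 / 2 * ∑ j ∈ V, |G i j|)
      ≤ ∑ i ∈ U, q / p * u i ^ 2 / 2 * mu1 A K := by
    refine Finset.sum_le_sum fun i hi => ?_
    exact mul_le_mul_of_nonneg_left (hrow i hi) (by positivity)
  have h2 : (∑ j ∈ V, p / q * v j ^ 2 / 2 * ∑ i ∈ U, |G i j|)
      ≤ ∑ j ∈ V, p / q * v j ^ 2 / 2 * mu1 A K := by
    refine Finset.sum_le_sum fun j hj => ?_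
    exact mul_le_mul_of_nonneg_left (hcol j hj) (by positivity)
  have hUex : (∑ i ∈ U, q / p * u i ^ 2 / 2 * mu1 A K) = q / p / 2 * mu1 A K * Su := by
    have : (∑ i ∈ U, u i ^ 2) = Su := by
      rw [hSu]
      exact Finset.sum_subset (Finset.subset_univ U) (fun i _ hi => by simp [hu i hi])
    rw [← this, Finset.mul_sum]
    exact Finset.sum_congr rfl fun i _ => by ring
  have hVex : (∑ j ∈ V, p / q * v j ^ 2 / 2 * mu1 A K) = p / q / 2 * mu1 A K * Sv := by
    have : (∑ j ∈ V, v j ^ 2) = Sv := by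
      rw [hSv]
      exact Finset.sum_subset (Finset.subset_univ V) (fun j _ hj => by simp [hv j hj])
    rw [← this, Finset.mul_sum]
    exact Finset.sum_congr rfl fun j _ => by ring
  have hfinal : q / p / 2 * mu1 A K * Su + p / q / 2 * mu1 A K * Sv = mu1 A K * (p * q) := by
    rw [← hp2, ← hq2]
    field_simp
    ring
  calc |∑ i ∈ U, ∑ j ∈ V, u i * v j * G i j| ≤ _ := habs
    _ = _ := hsplit
    _ ≤ (∑ i ∈ U, q / p * u i ^ 2 / 2 * mu1 A K) + ∑ j ∈ V, p / q * v j ^ 2 / 2 * mu1 A K :=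
        add_le_add h1 h2
    _ = mu1 A K * (p * q) := by rw [hUex, hVex, hfinal]

lemma count_blocks (b ℓ : ℕ) (hb : 0 < b) : ∀ (M p : ℕ),
    ∑ k ∈ Finset.range M,
        Real.sqrt b * Real.sqrt ((min (p + k * b + b) ℓ - (p + k * b) : ℕ) : ℝ)
      ≤ ((ℓ - p : ℕ) : ℝ) + (if p < ℓ then (b : ℝ) / 4 else 0) := by
  intro M
  induction M with
  | zero =>
      intro p
      simp only [Finset.range_zero, Finset.sum_empty]
      split_ifs <;> positivity
  | succ M ih =>
      intro p
      rw [Finset.sum_range_succ']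
      have hsh : ∀ k, (min (p + (k + 1) * b + b) ℓ - (p + (k + 1) * b) : ℕ)
          = (min ((p + b) + k * b + b) ℓ - ((p + b) + k * b) : ℕ) := by
        intro k
        have h1 : p + (k + 1) * b + b = (p + b) + k * b + b := by ring
        have h2 : p + (k + 1) * b = (p + b) + k * b := by ring
        rw [h1, h2]
      have hsum : (∑ k ∈ Finset.range M,
          Real.sqrt b * Real.sqrt ((min (p + (k+1) * b + b) ℓ - (p + (k+1) * b) : ℕ) : ℝ))
          ≤ ((ℓ - (p + b) : ℕ) : ℝ) + (if p + b < ℓ then (b : ℝ) / 4 else 0) := by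
        refine le_trans (le_of_eq ?_) (ih (p + b))
        exact Finset.sum_congr rfl fun k _ => by rw [hsh k]
      have h0B : (min (p + 0 * b + b) ℓ - (p + 0 * b) : ℕ) = (min (p + b) ℓ - p : ℕ) := by
        simp
      by_cases h1 : ℓ ≤ p
      · have e1 : (min (p + b) ℓ - p : ℕ) = 0 := by omega
        have e2 : (ℓ - p : ℕ) = 0 := by omega
        have e3 : (ℓ - (p + b) : ℕ) = 0 := by omega
        rw [e3, if_neg (show ¬ p + b < ℓ by omega)] at hsum
        rw [h0B, e1, e2, if_neg (show ¬ p < ℓ by omega)]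
        simpa using hsum
      · by_cases h2 : ℓ ≤ p + b
        · have e1 : (min (p + b) ℓ - p : ℕ) = ℓ - p := by omega
          have e3 : (ℓ - (p + b) : ℕ) = 0 := by omega
          rw [h0B, e1]
          rw [e3, if_neg (by omega)] at hsum
          simp only [Nat.cast_zero, zero_add, add_zero] at hsum
          set ρ : ℕ := ℓ - p with hρ
          have hρ1 : 1 ≤ ρ := by omega
          have key : Real.sqrt b * Real.sqrt (ρ : ℝ) ≤ (ρ : ℝ) + (b : ℝ) / 4 := by
            rw [← Real.sqrt_mul (by positivity) ((ρ : ℕ) : ℝ)]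
            have hle : (b : ℝ) * (ρ : ℝ) ≤ ((ρ : ℝ) + (b : ℝ) / 4) ^ 2 := by
              nlinarith [sq_nonneg ((ρ : ℝ) - (b : ℝ) / 4)]
            have := Real.sqrt_le_sqrt hle
            rwa [Real.sqrt_sq (by positivity)] at this
          rw [if_pos (by omega)]
          linarith
        · have e1 : (min (p + b) ℓ - p : ℕ) = b := by omega
          rw [h0B, e1]
          have hbb : Real.sqrt b * Real.sqrt b = (b : ℝ) := Real.mul_self_sqrt (by positivity)
          rw [if_pos (by omega)] at hsum ⊢
          have ec : ((ℓ - (p + b) : ℕ) : ℝ) + (b:ℝ) = ((ℓ - p : ℕ) : ℝ) := by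
            have hc1 : ((ℓ - (p + b) : ℕ) : ℝ) = (ℓ : ℝ) - (p : ℝ) - (b : ℝ) := by
              have : (p + b) ≤ ℓ := by omega
              push_cast [Nat.cast_sub this]
              ring
            have hc2 : ((ℓ - p : ℕ) : ℝ) = (ℓ : ℝ) - (p : ℝ) := by
              have : p ≤ ℓ := by omega
              push_cast [Nat.cast_sub this]
              ring
            rw [hc1, hc2]; ring
          linarith [hsum, hbb.le, hbb.ge]

lemma abel_sum (c : ℕ → ℝ) (N : ℕ) :
    ∑ m ∈ Finset.range N, (c m - c (m + 1)) * ((m : ℝ) + 1)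
      = (∑ m ∈ Finset.range N, c m) - N * c N := by
  induction N with
  | zero => simp
  | succ N ih =>
      rw [Finset.sum_range_succ, ih, Finset.sum_range_succ (f := c)]
      push_cast
      ring

lemma sqrt_sum_sq_add {β : Type*} (W : Finset β) (f g : β → ℝ) :
    Real.sqrt (∑ i ∈ W, (f i + g i) ^ 2)
      ≤ Real.sqrt (∑ i ∈ W, f i ^ 2) + Real.sqrt (∑ i ∈ W, g i ^ 2) := by
  set F := Real.sqrt (∑ i ∈ W, f i ^ 2) with hF
  set G := Real.sqrt (∑ i ∈ W, g i ^ 2) with hG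
  have hF0 : 0 ≤ F := Real.sqrt_nonneg _
  have hG0 : 0 ≤ G := Real.sqrt_nonneg _
  have hF2 : F ^ 2 = ∑ i ∈ W, f i ^ 2 := Real.sq_sqrt (Finset.sum_nonneg fun i _ => sq_nonneg _)
  have hG2 : G ^ 2 = ∑ i ∈ W, g i ^ 2 := Real.sq_sqrt (Finset.sum_nonneg fun i _ => sq_nonneg _)
  have hcs : (∑ i ∈ W, f i * g i) ≤ F * G := by
    have h1 := Finset.sum_mul_sq_le_sq_mul_sq W f g
    have h2 : (∑ i ∈ W, f i * g i) ≤ |∑ i ∈ W, f i * g i| := le_abs_self _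
    have h3 : |∑ i ∈ W, f i * g i| = Real.sqrt ((∑ i ∈ W, f i * g i) ^ 2) :=
      (Real.sqrt_sq_eq_abs _).symm
    have h4 := Real.sqrt_le_sqrt h1
    rw [← h3] at h4
    have h5 : Real.sqrt ((∑ i ∈ W, f i ^ 2) * ∑ i ∈ W, g i ^ 2) = F * G := by
      rw [Real.sqrt_mul (Finset.sum_nonneg fun i _ => sq_nonneg _)]
    linarith
  have hexp : (∑ i ∈ W, (f i + g i) ^ 2) ≤ (F + G) ^ 2 := by
    have : (∑ i ∈ W, (f i + g i) ^ 2)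
        = (∑ i ∈ W, f i ^ 2) + 2 * (∑ i ∈ W, f i * g i) + ∑ i ∈ W, g i ^ 2 := by
      have e : ∀ i, (f i + g i) ^ 2 = f i ^ 2 + 2 * (f i * g i) + g i ^ 2 := fun i => by ring
      simp_rw [e, Finset.sum_add_distrib, Finset.mul_sum]
    rw [this]
    nlinarith [hcs]
  have := Real.sqrt_le_sqrt hexp
  rwa [Real.sqrt_sq (by positivity)] at this

lemma sqrt_sum_sq_sum_le {ι β : Type*} (T : Finset ι) (f : ι → β → ℝ) (W : Finset β) :
    Real.sqrt (∑ i ∈ W, (∑ m ∈ T, f m i) ^ 2)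
      ≤ ∑ m ∈ T, Real.sqrt (∑ i ∈ W, f m i ^ 2) := by
  induction T using Finset.induction_on with
  | empty => simp
  | insert a T ha ih =>
      have h1 : (∑ i ∈ W, (∑ m ∈ insert a T, f m i) ^ 2)
          = ∑ i ∈ W, (f a i + ∑ m ∈ T, f m i) ^ 2 :=
        Finset.sum_congr rfl fun i _ => by rw [Finset.sum_insert ha]
      rw [h1, Finset.sum_insert ha]
      exact (sqrt_sum_sq_add W (fun i => f a i) (fun i => ∑ m ∈ T, f m i)).trans
        (add_le_add le_rfl ih)

lemma shifting (c : ℕ → ℝ) (hmono : ∀ i j, i ≤ j → c j ≤ c i)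
    (N : ℕ) (hzero : ∀ i, N ≤ i → c i = 0) (a b : ℕ) (ha : 0 < a) (hb : 0 < b)
    (hba : b ≤ 4 * a) (M : ℕ) :
    ∑ k ∈ Finset.range M, Real.sqrt (∑ i ∈ Finset.Ico (a + k * b) (a + k * b + b), c i ^ 2)
      ≤ (∑ i ∈ Finset.range N, c i) / Real.sqrt b := by
  have hsb : (0:ℝ) < Real.sqrt b := Real.sqrt_pos.mpr (by positivity)
  set t : ℕ → ℝ := fun m => c m - c (m + 1) with hts
  have ht : ∀ m, 0 ≤ t m := fun m => by
    have := hmono m (m + 1) (Nat.le_succ m); simp [hts]; linarith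
  have hdec : ∀ i, c i = ∑ m ∈ Finset.range N, t m * (if i ≤ m then (1:ℝ) else 0) := by
    intro i
    by_cases hi : N ≤ i
    · rw [hzero i hi]
      symm
      refine Finset.sum_eq_zero fun m hm => ?_
      rw [if_neg (by simp at hm; omega), mul_zero]
    · push_neg at hi
      have e1 : ∀ m, t m * (if i ≤ m then (1:ℝ) else 0) = if i ≤ m then t m else 0 := by
        intro m; split_ifs <;> ring
      simp_rw [e1]
      rw [Finset.sum_ite, Finset.sum_const_zero, add_zero]
      have e2 : (Finset.range N).filter (fun m => i ≤ m) = Finset.Ico i N := by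
        ext m; simp [Finset.mem_filter, Finset.mem_range, Finset.mem_Ico]; omega
      rw [e2, Finset.sum_Ico_eq_sum_range]
      have e3 : ∀ k, t (i + k) = c (i + k) - c (i + k + 1) := fun k => rfl
      have tele : ∑ k ∈ Finset.range (N - i), (c (i + k) - c (i + (k+1)))
          = c (i + 0) - c (i + (N - i)) := by
        exact Finset.sum_range_sub' (fun k => c (i + k)) (N - i)
      have e4 : (∑ k ∈ Finset.range (N - i), t (i + k))
          = ∑ k ∈ Finset.range (N - i), (c (i + k) - c (i + (k+1))) := by
        refine Finset.sum_congr rfl fun k _ => ?_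
        rw [e3 k, Nat.add_assoc]
      rw [e4, tele]
      have : i + (N - i) = N := by omega
      rw [this, hzero N le_rfl, Nat.add_zero]
      ring
  have hblock : ∀ k, Real.sqrt (∑ i ∈ Finset.Ico (a + k * b) (a + k * b + b), c i ^ 2)
      ≤ ∑ m ∈ Finset.range N, t m *
          Real.sqrt ((min (a + k * b + b) (m + 1) - (a + k * b) : ℕ) : ℝ) := by
    intro k
    set W := Finset.Ico (a + k * b) (a + k * b + b) with hW
    have h1 : Real.sqrt (∑ i ∈ W, c i ^ 2)
        = Real.sqrt (∑ i ∈ W, (∑ m ∈ Finset.range N,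
            t m * (if i ≤ m then (1:ℝ) else 0)) ^ 2) := by
      congr 1
      exact Finset.sum_congr rfl fun i _ => by rw [← hdec i]
    rw [h1]
    refine (sqrt_sum_sq_sum_le (Finset.range N)
      (fun m i => t m * (if i ≤ m then (1:ℝ) else 0)) W).trans ?_
    refine Finset.sum_le_sum fun m _ => ?_
    have h2 : (∑ i ∈ W, (t m * (if i ≤ m then (1:ℝ) else 0)) ^ 2)
        = t m ^ 2 * ∑ i ∈ W, (if i ≤ m then (1:ℝ) else 0) := by
      rw [Finset.mul_sum]
      refine Finset.sum_congr rfl fun i _ => by split_ifs <;> ring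
    have h3 : (∑ i ∈ W, (if i ≤ m then (1:ℝ) else 0))
        = ((min (a + k * b + b) (m + 1) - (a + k * b) : ℕ) : ℝ) := by
      rw [Finset.sum_boole]
      congr 1
      have : W.filter (fun i => i ≤ m) = Finset.Ico (a + k * b) (min (a + k * b + b) (m + 1)) := by
        ext i
        simp [hW, Finset.mem_filter, Finset.mem_Ico]
        omega
      rw [this, Nat.card_Ico]
    rw [h2, h3, Real.sqrt_mul (sq_nonneg _), Real.sqrt_sq (ht m)]
  have hswap : ∑ k ∈ Finset.range M, ∑ m ∈ Finset.range N,
        t m * Real.sqrt ((min (a + k * b + b) (m + 1) - (a + k * b) : ℕ) : ℝ)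
      = ∑ m ∈ Finset.range N, t m * ∑ k ∈ Finset.range M,
          Real.sqrt ((min (a + k * b + b) (m + 1) - (a + k * b) : ℕ) : ℝ) := by
    rw [Finset.sum_comm]
    exact Finset.sum_congr rfl fun m _ => by rw [Finset.mul_sum]
  have hcnt : ∀ m : ℕ, (∑ k ∈ Finset.range M,
        Real.sqrt ((min (a + k * b + b) (m + 1) - (a + k * b) : ℕ) : ℝ))
      ≤ ((m : ℝ) + 1) / Real.sqrt b := by
    intro m
    have h1 := count_blocks b (m + 1) hb M a
    have h2 : ((m + 1 - a : ℕ) : ℝ) + (if a < m + 1 then (b : ℝ) / 4 else 0)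
        ≤ (m : ℝ) + 1 := by
      split_ifs with h
      · have hc : ((m + 1 - a : ℕ) : ℝ) = (m : ℝ) + 1 - (a : ℝ) := by
          push_cast [Nat.cast_sub (by omega : a ≤ m + 1)]
          ring
        rw [hc]
        have : (b : ℝ) ≤ 4 * (a : ℝ) := by exact_mod_cast hba
        linarith
      · have hc : (m + 1 - a : ℕ) = 0 := by omega
        rw [hc]
        simp
        positivity
    have h3 : Real.sqrt b * (∑ k ∈ Finset.range M,
        Real.sqrt ((min (a + k * b + b) (m + 1) - (a + k * b) : ℕ) : ℝ)) ≤ (m : ℝ) + 1 := by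
      rw [Finset.mul_sum]
      exact le_trans h1 h2
    rw [le_div_iff₀ hsb]
    linarith [h3]
  have htotal : ∑ m ∈ Finset.range N, t m * (((m : ℝ) + 1) / Real.sqrt b)
      = (∑ i ∈ Finset.range N, c i) / Real.sqrt b := by
    have h1 : ∑ m ∈ Finset.range N, t m * (((m : ℝ) + 1) / Real.sqrt b)
        = (∑ m ∈ Finset.range N, t m * ((m : ℝ) + 1)) / Real.sqrt b := by
      rw [Finset.sum_div]
      exact Finset.sum_congr rfl fun m _ => by ring
    rw [h1]
    congr 1
    have := abel_sum c N
    rw [hzero N le_rfl] at this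
    simpa using this
  calc ∑ k ∈ Finset.range M, Real.sqrt (∑ i ∈ Finset.Ico (a + k * b) (a + k * b + b), c i ^ 2)
      ≤ ∑ k ∈ Finset.range M, ∑ m ∈ Finset.range N,
          t m * Real.sqrt ((min (a + k * b + b) (m + 1) - (a + k * b) : ℕ) : ℝ) :=
        Finset.sum_le_sum fun k _ => hblock k
    _ = _ := hswap
    _ ≤ ∑ m ∈ Finset.range N, t m * (((m : ℝ) + 1) / Real.sqrt b) :=
        Finset.sum_le_sum fun m _ => mul_le_mul_of_nonneg_left (hcnt m) (ht m)
    _ = _ := htotal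

lemma finsum_to_ico {N : ℕ} (f : ℕ → ℝ) (hf : ∀ i, N ≤ i → f i = 0) (p q : ℕ) :
    ∑ i ∈ Finset.univ.filter (fun i : Fin N => p ≤ (i : ℕ) ∧ (i : ℕ) < q), f (i : ℕ)
      = ∑ i ∈ Finset.Ico p q, f i := by
  have hinj : Set.InjOn (fun i : Fin N => (i : ℕ))
      (Finset.univ.filter (fun i : Fin N => p ≤ (i : ℕ) ∧ (i : ℕ) < q)) :=
    fun i _ j _ h => Fin.val_injective h
  have h1 : ∑ i ∈ (Finset.univ.filter (fun i : Fin N => p ≤ (i : ℕ) ∧ (i : ℕ) < q)).image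
        (fun i : Fin N => (i : ℕ)), f i
      = ∑ i ∈ Finset.univ.filter (fun i : Fin N => p ≤ (i : ℕ) ∧ (i : ℕ) < q), f (i : ℕ) :=
    Finset.sum_image (fun i hi j hj h => hinj hi hj h)
  have h2 : (Finset.univ.filter (fun i : Fin N => p ≤ (i : ℕ) ∧ (i : ℕ) < q)).image
        (fun i : Fin N => (i : ℕ))
      = (Finset.Ico p q).filter (fun i => i < N) := by
    ext i
    simp only [Finset.mem_image, Finset.mem_filter, Finset.mem_univ, true_and,
      Finset.mem_Ico]
    constructor
    · rintro ⟨j, hj, rfl⟩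
      exact ⟨⟨hj.1, hj.2⟩, j.isLt⟩
    · rintro ⟨⟨h1', h2'⟩, h3'⟩
      exact ⟨⟨i, h3'⟩, ⟨h1', h2'⟩, rfl⟩
  rw [← h1, h2]
  refine Finset.sum_subset (Finset.filter_subset _ _) fun i hi hni => ?_
  refine hf i ?_
  simp only [Finset.mem_filter] at hni
  by_contra hcon
  push_neg at hcon
  exact hni ⟨hi, hcon⟩

end helper

set_option maxHeartbeats 2000000 in
/-- Cumulative coherence implies the restricted eigenvalue condition (general form): if
`1 ≤ b ≤ 4a` and `μ₁(s+a−1) + τ√(s/b) μ₁(s+a+b−1) < 1`, then for every `x` and every `S`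
with `|S| ≤ s` and `‖x_{Sᶜ}‖₁ ≤ τ‖x_S‖₁`,
`‖Ax‖₂ ≥ [(1 − μ₁(s+a−1) − τ√(s/b) μ₁(s+a+b−1)) / √(1 + μ₁(s+a−1))] ‖x_S‖₂`; hence `A`
satisfies the RE-condition of order `s` and `τ` with the corresponding lower bound on
`K(s,τ)`. -/
theorem stmt16 {m n : ℕ} (A : Matrix (Fin m) (Fin n) ℝ)
    (hA : ∀ j, ∑ k, (A k j) ^ 2 = 1)
    (s a b : ℕ) (hs1 : 1 ≤ s) (ha1 : 1 ≤ a) (hb1 : 1 ≤ b) (hb4a : b ≤ 4 * a)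
    (hsn : s + a + b - 1 ≤ n - 1)
    (τ : ℝ) (hτ : 0 < τ)
    (hcond : mu1 A (s + a - 1) +
      τ * Real.sqrt ((s : ℝ) / b) * mu1 A (s + a + b - 1) < 1) :
    ∀ x : Fin n → ℝ, ∀ S : Finset (Fin n), S.card ≤ s →
      (∑ j ∈ Sᶜ, |x j|) ≤ τ * ∑ j ∈ S, |x j| →
      Real.sqrt (∑ k, (A.mulVec x k) ^ 2) ≥
        (1 - mu1 A (s + a - 1) -
            τ * Real.sqrt ((s : ℝ) / b) * mu1 A (s + a + b - 1)) /
            Real.sqrt (1 + mu1 A (s + a - 1)) *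
          Real.sqrt (∑ j ∈ S, (x j) ^ 2) := by
  intro x S hScard hcone
  have hn : 0 < n := by omega
  set μa := mu1 A (s + a - 1) with hμa
  set μab := mu1 A (s + a + b - 1) with hμab
  have hμa0 : 0 ≤ μa := mu1_nonneg A _ hn
  have hμab0 : 0 ≤ μab := mu1_nonneg A _ hn
  set N := Sᶜ.card with hN
  -- the sorted enumeration of Sᶜ
  obtain ⟨e, he_inj, he_mem, he_surj, he_mono⟩ :
      ∃ e : Fin N → Fin n, Function.Injective e ∧ (∀ i, e i ∈ Sᶜ) ∧
        (∀ j ∈ Sᶜ, ∃ i, e i = j) ∧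
        (∀ i j : Fin N, i ≤ j → |x (e j)| ≤ |x (e i)|) := by
    have hcard : Sᶜ.card = N := rfl
    set emb := Sᶜ.orderIsoOfFin hcard with hemb
    set g : Fin N → ℝ := fun i => -|x ((emb i : Fin n))| with hg
    set σ := Tuple.sort g with hσ
    refine ⟨fun i => (emb (σ i) : Fin n), ?_, ?_, ?_, ?_⟩
    · intro i j h
      exact σ.injective (emb.injective (Subtype.coe_injective h))
    · intro i; exact (emb (σ i)).2
    · intro j hj
      obtain ⟨i, hi⟩ := emb.surjective ⟨j, hj⟩
      exact ⟨σ.symm i, by simp [hi]⟩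
    · intro i j hij
      have := Tuple.monotone_sort g hij
      simp only [Function.comp_apply, hg] at this
      linarith [this]
  -- sorted magnitude sequence
  set c : ℕ → ℝ := fun i => if h : i < N then |x (e ⟨i, h⟩)| else 0 with hc
  have hc_zero : ∀ i, N ≤ i → c i = 0 := by
    intro i hi; rw [hc]; simp only [dif_neg (by omega : ¬ i < N)]
  have hc_nonneg : ∀ i, 0 ≤ c i := by
    intro i; rw [hc]; dsimp only; split_ifs; exacts [abs_nonneg _, le_rfl]
  have hc_mono : ∀ i j, i ≤ j → c j ≤ c i := by
    intro i j hij
    by_cases hj : j < N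
    · have hi : i < N := by omega
      rw [hc]; simp only [dif_pos hi, dif_pos hj]
      exact he_mono ⟨i, hi⟩ ⟨j, hj⟩ hij
    · rw [hc_zero j (by omega)]; exact hc_nonneg i
  -- blocks
  set P1 : Finset (Fin N) := Finset.univ.filter (fun i : Fin N => (i : ℕ) < a) with hP1
  set Pb : ℕ → Finset (Fin N) := fun k =>
    Finset.univ.filter (fun i : Fin N => a + k * b ≤ (i : ℕ) ∧ (i : ℕ) < a + k * b + b) with hPb
  set S1 : Finset (Fin n) := P1.image e with hS1
  set Bk : ℕ → Finset (Fin n) := fun k => (Pb k).image e with hBk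
  set J : Finset (Fin n) := S ∪ S1 with hJ
  set y : Fin n → ℝ := fun j => if j ∈ J then x j else 0 with hy
  set u : ℕ → Fin n → ℝ := fun k j => if j ∈ Bk k then x j else 0 with hu
  have hS1card : S1.card ≤ a := by
    refine (Finset.card_image_le).trans ?_
    have : P1.card ≤ (Finset.range a).card := by
      refine Finset.card_le_card_of_injOn (fun i : Fin N => (i : ℕ)) ?_ ?_
      · intro i hi
        replace hi := Finset.mem_filter.mp (Finset.mem_coe.mp hi)
        exact Finset.mem_range.mpr hi.2
      · exact fun i _ j _ h => Fin.val_injective h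
    simpa using this
  have hJcard : J.card ≤ s + a :=
    (Finset.card_union_le _ _).trans (add_le_add hScard hS1card)
  have hBkcard : ∀ k, (Bk k).card ≤ b := by
    intro k
    refine (Finset.card_image_le).trans ?_
    have : (Pb k).card ≤ (Finset.Ico (a + k * b) (a + k * b + b)).card := by
      refine Finset.card_le_card_of_injOn (fun i : Fin N => (i : ℕ)) ?_ ?_
      · intro i hi
        replace hi := Finset.mem_filter.mp (Finset.mem_coe.mp hi)
        exact Finset.mem_Ico.mpr ⟨hi.2.1, hi.2.2⟩
      · exact fun i _ j _ h => Fin.val_injective h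
    simpa [Nat.card_Ico] using this
  have hBkJ : ∀ k, ∀ j ∈ Bk k, j ∉ J := by
    intro k j hjB hjJ
    simp only [hBk, Finset.mem_image] at hjB
    obtain ⟨i, hiP, rfl⟩ := hjB
    simp only [hPb, Finset.mem_filter] at hiP
    rcases Finset.mem_union.mp hjJ with hjS | hjS1
    · exact (Finset.mem_compl.mp (he_mem i)) hjS
    · simp only [hS1, Finset.mem_image] at hjS1
      obtain ⟨i', hi'P, hi'e⟩ := hjS1
      have : i' = i := he_inj hi'e
      subst this
      simp only [hP1, Finset.mem_filter] at hi'P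
      omega
  have hdisj : ∀ k, Disjoint (Bk k) J :=
    fun k => Finset.disjoint_left.mpr (hBkJ k)
  have hy_supp : ∀ j, j ∉ J → y j = 0 := fun j hj => by rw [hy]; exact if_neg hj
  have hu_supp : ∀ k j, j ∉ Bk k → u k j = 0 := fun k j hj => by rw [hu]; exact if_neg hj
  -- decomposition of x
  have hxdec : ∀ j, x j = y j + ∑ k ∈ Finset.range N, u k j := by
    intro j
    by_cases hj : j ∈ J
    · rw [hy]
      simp only [if_pos hj]
      have : ∑ k ∈ Finset.range N, u k j = 0 :=
        Finset.sum_eq_zero fun k _ => hu_supp k j (fun hB => hBkJ k j hB hj)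
      rw [this, add_zero]
    · rw [hy]
      simp only [if_neg hj]
      have hjS : j ∈ Sᶜ := Finset.mem_compl.mpr (fun hS' => hj (Finset.mem_union_left _ hS'))
      obtain ⟨i, rfl⟩ := he_surj j hjS
      have hia : a ≤ (i : ℕ) := by
        by_contra hcon
        push_neg at hcon
        exact hj (Finset.mem_union_right _ (Finset.mem_image_of_mem e
          (by simp [hP1, hcon])))
      set d : ℕ := (i : ℕ) - a with hd
      set k0 : ℕ := d / b with hk0
      have hdb : b * k0 ≤ d ∧ d < b * k0 + b := by
        have hk := Nat.div_add_mod d b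
        rw [← hk0] at hk
        have hm : d % b < b := Nat.mod_lt _ (by omega)
        omega
      have hcm : k0 * b = b * k0 := Nat.mul_comm _ _
      have hk0win : a + k0 * b ≤ (i : ℕ) ∧ (i : ℕ) < a + k0 * b + b := by
        constructor <;> omega
      have hjB : e i ∈ Bk k0 :=
        Finset.mem_image_of_mem e (by simp [hPb, hk0win.1, hk0win.2])
      rw [Finset.sum_eq_single k0]
      · rw [hu]; simp only [if_pos hjB, zero_add]
      · intro k hk hkne
        refine hu_supp k (e i) fun hB => ?_
        simp only [hBk, Finset.mem_image] at hB
        obtain ⟨i', hi'P, hi'e⟩ := hB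
        have : i' = i := he_inj hi'e
        subst this
        simp only [hPb, Finset.mem_filter] at hi'P
        obtain ⟨hp1, hp2⟩ := hi'P.2
        refine hkne ?_
        rcases Nat.lt_trichotomy k k0 with h | h | h
        · exfalso
          have h5 : (k + 1) * b ≤ k0 * b := Nat.mul_le_mul_right _ (by omega)
          have e : (k + 1) * b = k * b + b := by ring
          omega
        · exact h
        · exfalso
          have h5 : (k0 + 1) * b ≤ k * b := Nat.mul_le_mul_right _ (by omega)
          have e : (k0 + 1) * b = k0 * b + b := by ring
          omega
      · intro hk0n
        exfalso
        apply hk0n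
        simp only [Finset.mem_range]
        have h6 : k0 ≤ d := hk0 ▸ Nat.div_le_self d b
        have h7 := i.isLt
        omega
  -- quantities
  set X2 : ℝ := ∑ j ∈ S, x j ^ 2 with hX2
  set Y2 : ℝ := ∑ j, y j ^ 2 with hY2
  have hX20 : 0 ≤ X2 := Finset.sum_nonneg fun j _ => sq_nonneg _
  have hY20 : 0 ≤ Y2 := Finset.sum_nonneg fun j _ => sq_nonneg _
  have hX2Y2 : X2 ≤ Y2 := by
    have h1 : X2 = ∑ j ∈ S, y j ^ 2 := by
      refine Finset.sum_congr rfl fun j hj => ?_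
      rw [hy]
      simp only [if_pos (show j ∈ J from Finset.mem_union_left _ hj)]
    rw [h1, hY2]
    exact Finset.sum_le_sum_of_subset_of_nonneg (Finset.subset_univ S)
      fun j _ _ => sq_nonneg _
  -- norms of blocks
  have hnormuk : ∀ k, (∑ j, u k j ^ 2)
      = ∑ i ∈ Finset.Ico (a + k * b) (a + k * b + b), c i ^ 2 := by
    intro k
    have h1 : (∑ j, u k j ^ 2) = ∑ j ∈ Bk k, x j ^ 2 := by
      have e1 : ∀ j, u k j ^ 2 = if j ∈ Bk k then x j ^ 2 else 0 := by
        intro j; rw [hu]; dsimp only; split_ifs <;> ring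
      simp_rw [e1]
      rw [Finset.sum_ite_mem, Finset.univ_inter]
    have h2 : (∑ j ∈ Bk k, x j ^ 2) = ∑ i ∈ Pb k, x (e i) ^ 2 := by
      rw [hBk]
      exact Finset.sum_image fun i _ j _ h => he_inj h
    have h3 : (∑ i ∈ Pb k, x (e i) ^ 2)
        = ∑ i ∈ Finset.Ico (a + k * b) (a + k * b + b), c i ^ 2 := by
      have e2 : ∀ i : Fin N, x (e i) ^ 2 = c (i : ℕ) ^ 2 := by
        intro i
        rw [hc]
        simp only [dif_pos i.isLt, Fin.eta, sq_abs]
      rw [hPb]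
      calc ∑ i ∈ Finset.univ.filter
            (fun i : Fin N => a + k * b ≤ (i : ℕ) ∧ (i : ℕ) < a + k * b + b), x (e i) ^ 2
          = ∑ i ∈ Finset.univ.filter
            (fun i : Fin N => a + k * b ≤ (i : ℕ) ∧ (i : ℕ) < a + k * b + b),
              (fun i' => c i' ^ 2) (i : ℕ) :=
            Finset.sum_congr rfl fun i _ => e2 i
        _ = ∑ i ∈ Finset.Ico (a + k * b) (a + k * b + b), c i ^ 2 :=
            finsum_to_ico (fun i' => c i' ^ 2)
              (fun i hi => by show c i ^ 2 = 0; rw [hc_zero i hi]; ring) _ _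
    rw [h1, h2, h3]
  -- ℓ¹ identity
  have hl1 : (∑ i ∈ Finset.range N, c i) = ∑ j ∈ Sᶜ, |x j| := by
    have himg : Finset.univ.image e = Sᶜ := by
      ext j
      simp only [Finset.mem_image, Finset.mem_univ, true_and]
      exact ⟨fun ⟨i, hi⟩ => hi ▸ he_mem i, fun hj => he_surj j hj⟩
    rw [← himg, Finset.sum_image (fun i _ j _ h => he_inj h)]
    rw [← Fin.sum_univ_eq_sum_range c N]
    refine Finset.sum_congr rfl fun i _ => ?_
    rw [hc]
    simp only [dif_pos i.isLt, Fin.eta]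
  -- block ℓ² sum bound
  have hblocksum : (∑ k ∈ Finset.range N, Real.sqrt (∑ j, u k j ^ 2))
      ≤ τ * (Real.sqrt s / Real.sqrt b) * Real.sqrt X2 := by
    have h1 : (∑ k ∈ Finset.range N, Real.sqrt (∑ j, u k j ^ 2))
        = ∑ k ∈ Finset.range N,
            Real.sqrt (∑ i ∈ Finset.Ico (a + k * b) (a + k * b + b), c i ^ 2) :=
      Finset.sum_congr rfl fun k _ => by rw [hnormuk k]
    have h2 := shifting c hc_mono N hc_zero a b (by omega) (by omega) hb4a N
    have hl1S : (∑ j ∈ S, |x j|) ≤ Real.sqrt s * Real.sqrt X2 := by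
      have hcs := Finset.sum_mul_sq_le_sq_mul_sq S (fun _ => (1:ℝ)) (fun j => |x j|)
      simp only [one_mul, mul_one, one_pow, Finset.sum_const, nsmul_eq_mul, sq_abs] at hcs
      have h4 : (∑ j ∈ S, |x j|) = Real.sqrt ((∑ j ∈ S, |x j|) ^ 2) :=
        (Real.sqrt_sq (Finset.sum_nonneg fun j _ => abs_nonneg _)).symm
      rw [h4]
      have h5 : ((S.card : ℝ) * ∑ j ∈ S, x j ^ 2) ≤ (s : ℝ) * X2 := by
        refine mul_le_mul_of_nonneg_right ?_ (by rw [← hX2] at *; exact hX20)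
        exact_mod_cast hScard
      refine (Real.sqrt_le_sqrt (hcs.trans h5)).trans ?_
      rw [Real.sqrt_mul (by positivity)]
    have hsb : (0:ℝ) < Real.sqrt b := Real.sqrt_pos.mpr (by positivity)
    calc (∑ k ∈ Finset.range N, Real.sqrt (∑ j, u k j ^ 2))
        = _ := h1
      _ ≤ (∑ i ∈ Finset.range N, c i) / Real.sqrt b := h2
      _ = (∑ j ∈ Sᶜ, |x j|) / Real.sqrt b := by rw [hl1]
      _ ≤ (τ * ∑ j ∈ S, |x j|) / Real.sqrt b := by
          exact div_le_div_of_nonneg_right hcone hsb.le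
      _ ≤ (τ * (Real.sqrt s * Real.sqrt X2)) / Real.sqrt b := by
          refine div_le_div_of_nonneg_right ?_ hsb.le
          exact mul_le_mul_of_nonneg_left hl1S hτ.le
      _ = τ * (Real.sqrt s / Real.sqrt b) * Real.sqrt X2 := by ring
  -- main quadratic estimates
  have hJcard' : J.card ≤ (s + a - 1) + 1 := by omega
  have hquad := quadform_bound A hA (s + a - 1) J hJcard' y hy_supp
  rw [← dot_mulVec] at hquad
  have hcross : ∀ k, |∑ kk, A.mulVec (u k) kk * A.mulVec y kk|
      ≤ μab * (Real.sqrt (∑ j, u k j ^ 2) * Real.sqrt Y2) := by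
    intro k
    rw [dot_mulVec]
    exact cross_bound A hn (s + a + b - 1) (Bk k) J (hdisj k)
      (by have := hBkcard k; omega) (by omega) (u k) y (hu_supp k) hy_supp
  -- decomposition of the inner product
  have hmv : ∀ kk, A.mulVec x kk = A.mulVec y kk + ∑ k ∈ Finset.range N, A.mulVec (u k) kk := by
    intro kk
    simp only [Matrix.mulVec, dotProduct]
    have e1 : ∀ i, A kk i * x i = A kk i * y i + ∑ k ∈ Finset.range N, A kk i * u k i := by
      intro i
      rw [hxdec i, mul_add, Finset.mul_sum]
    rw [Finset.sum_congr rfl fun i _ => e1 i, Finset.sum_add_distrib]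
    congr 1
    rw [Finset.sum_comm]
  have hQdec : (∑ kk, A.mulVec x kk * A.mulVec y kk)
      = (∑ kk, A.mulVec y kk * A.mulVec y kk)
        + ∑ k ∈ Finset.range N, ∑ kk, A.mulVec (u k) kk * A.mulVec y kk := by
    have e1 : ∀ kk, A.mulVec x kk * A.mulVec y kk
        = A.mulVec y kk * A.mulVec y kk
          + ∑ k ∈ Finset.range N, A.mulVec (u k) kk * A.mulVec y kk := by
      intro kk
      rw [hmv kk, add_mul, Finset.sum_mul]
    rw [Finset.sum_congr rfl fun kk _ => e1 kk, Finset.sum_add_distrib]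
    congr 1
    rw [Finset.sum_comm]
  -- assemble
  set κ : ℝ := 1 - μa - τ * (Real.sqrt s / Real.sqrt b) * μab with hκ
  have hsqrt_div : Real.sqrt ((s : ℝ) / b) = Real.sqrt s / Real.sqrt b := by
    rw [Real.sqrt_div (by positivity)]
  have hPuu : |((∑ kk, A.mulVec y kk * A.mulVec y kk) - Y2)| ≤ μa * Y2 := hquad
  have hPlow : (1 - μa) * Y2 ≤ ∑ kk, A.mulVec y kk * A.mulVec y kk := by
    have := (abs_le.mp hPuu).1
    linarith
  have hPhigh : (∑ kk, A.mulVec y kk * A.mulVec y kk) ≤ (1 + μa) * Y2 := by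
    have := (abs_le.mp hPuu).2
    linarith
  have hcross_total : |∑ k ∈ Finset.range N, ∑ kk, A.mulVec (u k) kk * A.mulVec y kk|
      ≤ μab * (τ * (Real.sqrt s / Real.sqrt b) * Real.sqrt X2) * Real.sqrt Y2 := by
    refine (Finset.abs_sum_le_sum_abs _ _).trans ?_
    have h1 : (∑ k ∈ Finset.range N, |∑ kk, A.mulVec (u k) kk * A.mulVec y kk|)
        ≤ ∑ k ∈ Finset.range N, μab * (Real.sqrt (∑ j, u k j ^ 2) * Real.sqrt Y2) :=
      Finset.sum_le_sum fun k _ => hcross k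
    refine h1.trans ?_
    have h2 : (∑ k ∈ Finset.range N, μab * (Real.sqrt (∑ j, u k j ^ 2) * Real.sqrt Y2))
        = μab * Real.sqrt Y2 * ∑ k ∈ Finset.range N, Real.sqrt (∑ j, u k j ^ 2) := by
      rw [Finset.mul_sum]
      exact Finset.sum_congr rfl fun k _ => by ring
    rw [h2]
    have h3 : μab * Real.sqrt Y2 * (∑ k ∈ Finset.range N, Real.sqrt (∑ j, u k j ^ 2))
        ≤ μab * Real.sqrt Y2 * (τ * (Real.sqrt s / Real.sqrt b) * Real.sqrt X2) :=
      mul_le_mul_of_nonneg_left hblocksum (by positivity)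
    linarith [h3]
  set Q : ℝ := ∑ kk, A.mulVec x kk * A.mulVec y kk with hQ
  have hXYs : Real.sqrt X2 ≤ Real.sqrt Y2 := Real.sqrt_le_sqrt hX2Y2
  have hQlow : κ * Y2 ≤ Q := by
    rw [hQdec]
    have h1 : -(μab * (τ * (Real.sqrt s / Real.sqrt b) * Real.sqrt X2) * Real.sqrt Y2)
        ≤ ∑ k ∈ Finset.range N, ∑ kk, A.mulVec (u k) kk * A.mulVec y kk :=
      neg_le_of_abs_le hcross_total
    have h2 : μab * (τ * (Real.sqrt s / Real.sqrt b) * Real.sqrt X2) * Real.sqrt Y2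
        ≤ μab * (τ * (Real.sqrt s / Real.sqrt b)) * Y2 := by
      have e1 : Real.sqrt Y2 * Real.sqrt Y2 = Y2 := Real.mul_self_sqrt hY20
      have h3 : Real.sqrt X2 * Real.sqrt Y2 ≤ Y2 := by
        calc Real.sqrt X2 * Real.sqrt Y2 ≤ Real.sqrt Y2 * Real.sqrt Y2 :=
            mul_le_mul_of_nonneg_right hXYs (Real.sqrt_nonneg _)
          _ = Y2 := e1
      calc μab * (τ * (Real.sqrt s / Real.sqrt b) * Real.sqrt X2) * Real.sqrt Y2
          = μab * (τ * (Real.sqrt s / Real.sqrt b)) * (Real.sqrt X2 * Real.sqrt Y2) := by ring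
        _ ≤ μab * (τ * (Real.sqrt s / Real.sqrt b)) * Y2 := by
            refine mul_le_mul_of_nonneg_left h3 ?_
            have : (0:ℝ) ≤ Real.sqrt s / Real.sqrt b := by positivity
            positivity
    rw [hκ]
    have hexp : (1 - μa - τ * (Real.sqrt s / Real.sqrt b) * μab) * Y2
        = (1 - μa) * Y2 - μab * (τ * (Real.sqrt s / Real.sqrt b)) * Y2 := by ring
    linarith [hPlow, h1, h2, hexp.le, hexp.ge]
  have hQhigh : Q ≤ Real.sqrt (∑ kk, A.mulVec x kk ^ 2) * (Real.sqrt (1 + μa) * Real.sqrt Y2) := by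
    have hcs := Finset.sum_mul_sq_le_sq_mul_sq Finset.univ (fun kk => A.mulVec x kk)
      (fun kk => A.mulVec y kk)
    have h4 : Q ≤ Real.sqrt (Q ^ 2) := by
      rw [Real.sqrt_sq_eq_abs]; exact le_abs_self _
    have h5 : Real.sqrt (Q ^ 2)
        ≤ Real.sqrt ((∑ kk, A.mulVec x kk ^ 2) * ∑ kk, A.mulVec y kk ^ 2) :=
      Real.sqrt_le_sqrt hcs
    have h6 : (∑ kk, A.mulVec y kk ^ 2) = ∑ kk, A.mulVec y kk * A.mulVec y kk :=
      Finset.sum_congr rfl fun kk _ => sq (A.mulVec y kk)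
    have h7 : Real.sqrt ((∑ kk, A.mulVec x kk ^ 2) * ∑ kk, A.mulVec y kk ^ 2)
        ≤ Real.sqrt (∑ kk, A.mulVec x kk ^ 2) * (Real.sqrt (1 + μa) * Real.sqrt Y2) := by
      rw [Real.sqrt_mul (Finset.sum_nonneg fun kk _ => sq_nonneg _)]
      refine mul_le_mul_of_nonneg_left ?_ (Real.sqrt_nonneg _)
      rw [← Real.sqrt_mul (by positivity)]
      refine Real.sqrt_le_sqrt ?_
      rw [h6]
      exact hPhigh
    exact h4.trans (h5.trans h7)
  -- finish
  rw [ge_iff_le, hsqrt_div, ← hκ]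
  set W : ℝ := Real.sqrt (∑ kk, A.mulVec x kk ^ 2) with hW
  have hW0 : 0 ≤ W := Real.sqrt_nonneg _
  have hD : (0:ℝ) < Real.sqrt (1 + μa) := Real.sqrt_pos.mpr (by linarith)
  by_cases hκ0 : κ ≤ 0
  · have : κ / Real.sqrt (1 + μa) * Real.sqrt X2 ≤ 0 :=
      mul_nonpos_of_nonpos_of_nonneg (div_nonpos_of_nonpos_of_nonneg hκ0 hD.le)
        (Real.sqrt_nonneg _)
    linarith
  push_neg at hκ0
  by_cases hYz : Real.sqrt Y2 = 0
  · have hXz : Real.sqrt X2 = 0 := le_antisymm (hYz ▸ hXYs) (Real.sqrt_nonneg _)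
    rw [hXz, mul_zero]
    exact hW0
  have hYpos : 0 < Real.sqrt Y2 := lt_of_le_of_ne (Real.sqrt_nonneg _) (Ne.symm hYz)
  have hY2eq : Y2 = Real.sqrt Y2 * Real.sqrt Y2 := (Real.mul_self_sqrt hY20).symm
  have hmain : κ * Real.sqrt Y2 ≤ W * Real.sqrt (1 + μa) := by
    have h1 : κ * Real.sqrt Y2 * Real.sqrt Y2 ≤ W * Real.sqrt (1 + μa) * Real.sqrt Y2 := by
      calc κ * Real.sqrt Y2 * Real.sqrt Y2 = κ * (Real.sqrt Y2 * Real.sqrt Y2) := by ring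
        _ = κ * Y2 := by rw [Real.mul_self_sqrt hY20]
        _ ≤ Q := hQlow
        _ ≤ W * (Real.sqrt (1 + μa) * Real.sqrt Y2) := hQhigh
        _ = W * Real.sqrt (1 + μa) * Real.sqrt Y2 := by ring
    exact le_of_mul_le_mul_right h1 hYpos
  have h2 : κ * Real.sqrt X2 ≤ W * Real.sqrt (1 + μa) := by
    calc κ * Real.sqrt X2 ≤ κ * Real.sqrt Y2 :=
        mul_le_mul_of_nonneg_left hXYs hκ0.le
      _ ≤ W * Real.sqrt (1 + μa) := hmain
  calc κ / Real.sqrt (1 + μa) * Real.sqrt X2 = κ * Real.sqrt X2 / Real.sqrt (1 + μa) := by ring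
    _ ≤ W := by
        rw [div_le_iff₀ hD]
        linarith [h2]
end

section
/- Let A be an m×n real matrix whose columns have ℓ2-norm 1, let s ∈ {1,…,n} with 2s−1 ≤ n−1, and assume μ₁(A, s−1) + μ₁(A, 2s−1) < 1. Let x ∈ ℝ^n, b = Ax + z with ‖Aᵀz‖_∞ ≤ η for some η ≥ 0, and let x̂ be a minimizer of ‖y‖₁ over all y ∈ ℝ^n with ‖Aᵀ(b − Ay)‖_∞ ≤ η (the Dantzig selector). Then ‖x̂ − x‖₂ ≤ [2√2·√s / (1 − μ₁(A,s−1) − μ₁(A,2s−1))]·η + [ √2·μ₁(A,2s−1) / (1 − μ₁(A,s−1) − μ₁(A,2s−1)) + 1 ]·(2‖x_{−max(s)}‖₁/√s). In particular, every s-sparse signal is stably recovered under the condition μ₁(s−1) + μ₁(2s−1) < 1. -/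
open scoped Classical

namespace Stmt17Aux

/-! ### Generic sequence lemmas -/

/-- Sum of an antitone nonnegative sequence over any finset is at most the sum over
an initial segment of the same cardinality. -/
lemma sum_finset_le_range (b : ℕ → ℝ) (hb : ∀ k, b (k + 1) ≤ b k) (hb0 : ∀ k, 0 ≤ b k)
    (T : Finset ℕ) : ∑ k ∈ T, b k ≤ ∑ k ∈ Finset.range T.card, b k := by
  have hanti : Antitone b := antitone_nat_of_succ_le hb
  suffices H : ∀ c (T : Finset ℕ), T.card = c → ∑ k ∈ T, b k ≤ ∑ k ∈ Finset.range c, b k by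
    simpa using H T.card T rfl
  intro c
  induction c with
  | zero => intro T hn; simp [Finset.card_eq_zero.mp hn]
  | succ c ih =>
    intro T hn
    have hne : T.Nonempty := by rw [← Finset.card_pos, hn]; omega
    have htT : T.max' hne ∈ T := T.max'_mem hne
    have hc : c ≤ T.max' hne := by
      have hsub : T ⊆ Finset.range (T.max' hne + 1) := by
        intro a ha
        simp only [Finset.mem_range, Nat.lt_succ_iff]
        exact T.le_max' a ha
      have := Finset.card_le_card hsub
      simp only [Finset.card_range, hn] at this
      omega
    have herase : (T.erase (T.max' hne)).card = c := by
      rw [Finset.card_erase_of_mem htT, hn]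
      omega
    calc ∑ k ∈ T, b k = ∑ k ∈ T.erase (T.max' hne), b k + b (T.max' hne) := by
          rw [Finset.sum_erase_add _ _ htT]
      _ ≤ ∑ k ∈ Finset.range c, b k + b c := by
          have h1 := ih (T.erase (T.max' hne)) herase
          have h2 := hanti hc
          linarith
      _ = ∑ k ∈ Finset.range (c + 1), b k := (Finset.sum_range_succ b c).symm

/-! ### The increment function and its cumulative sum -/

/-- increment of the majorant -/
noncomputable def inc (s : ℕ) (α β γ : ℝ) (k : ℕ) : ℝ :=
  (if k = 1 then α else 0) + (if k = s then β else 0) +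
  (if s ≤ k then γ else 0) - (if 1 ≤ k ∧ k ≤ s - 1 then γ else 0)

/-- the majorant -/
noncomputable def ll (s : ℕ) (α β γ : ℝ) (k : ℕ) : ℝ := ∑ j ∈ Finset.Icc 1 k, inc s α β γ j

lemma ll_zero (s : ℕ) (α β γ : ℝ) : ll s α β γ 0 = 0 := by simp [ll]

lemma ll_succ (s : ℕ) (α β γ : ℝ) (k : ℕ) (hk : 1 ≤ k) :
    ll s α β γ k = ll s α β γ (k - 1) + inc s α β γ k := by
  obtain ⟨k', rfl⟩ : ∃ k', k = k' + 1 := ⟨k - 1, by omega⟩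
  simp only [ll, Nat.add_sub_cancel]
  rw [Finset.sum_Icc_succ_top (by omega)]

/-- Closed form for `ll` below `s`. -/
lemma ll_low (s : ℕ) (α β γ : ℝ) (k : ℕ) (hs : 1 ≤ s) (hk1 : 1 ≤ k) (hk : k ≤ s - 1) :
    ll s α β γ k = α - γ * k := by
  induction k with
  | zero => omega
  | succ c ih =>
    rcases Nat.eq_or_lt_of_le hk1 with h1 | h1
    · -- c + 1 = 1
      have hc : c = 0 := by omega
      subst hc
      simp only [ll, show Finset.Icc 1 1 = {1} from rfl, Finset.sum_singleton, inc]
      split_ifs <;> first | (exfalso; omega) | (push_cast; ring)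
    · have hc1 : 1 ≤ c := by omega
      rw [ll_succ s α β γ (c+1) (by omega)]
      simp only [Nat.add_sub_cancel]
      rw [ih hc1 (by omega)]
      simp only [inc]
      split_ifs <;> first | (exfalso; omega) | (push_cast; ring)

/-- Closed form for `ll` at and above `s`. -/
lemma ll_high (s : ℕ) (α β γ : ℝ) (k : ℕ) (hs : 1 ≤ s) (hk : s ≤ k) :
    ll s α β γ k = α + β + γ * ((k : ℝ) + 2 - 2 * s) := by
  induction k with
  | zero => omega
  | succ c ih =>
    rcases Nat.eq_or_lt_of_le hk with h1 | h1
    · -- c + 1 = s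
      rw [ll_succ s α β γ (c+1) (by omega)]
      simp only [Nat.add_sub_cancel]
      rcases Nat.eq_or_lt_of_le hs with h2 | h2
      · -- s = 1, c = 0
        have hc0 : c = 0 := by omega
        subst hc0
        have hs1 : s = 1 := by omega
        subst hs1
        rw [ll_zero]
        simp only [inc]
        split_ifs <;> first | (exfalso; omega) | (push_cast; ring)
      · -- s ≥ 2, so c = s - 1 ≥ 1
        rw [ll_low s α β γ c hs (by omega) (by omega)]
        have hsc : (s : ℝ) = (c : ℝ) + 1 := by exact_mod_cast h1
        simp only [inc]
        split_ifs <;> first | (exfalso; omega) | (rw [hsc]; push_cast; ring)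
    · rw [ll_succ s α β γ (c+1) (by omega)]
      simp only [Nat.add_sub_cancel]
      rw [ih (by omega)]
      simp only [inc]
      split_ifs <;> first | (exfalso; omega) | (push_cast; ring)

/-! ### Abel summation bound -/

lemma abel_bound (b r : ℕ → ℝ) (L : ℕ → ℝ) (hb : ∀ k, b (k + 1) ≤ b k)
    (hb0 : ∀ k, 0 ≤ b k) (hL0 : L 0 = 0) :
    ∀ M : ℕ, (∀ k, 1 ≤ k → k ≤ M → (∑ j ∈ Finset.Icc 1 k, r j) ≤ L k) →
      ∑ k ∈ Finset.Icc 1 M, r k * b k ≤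
        (∑ k ∈ Finset.Icc 1 M, (L k - L (k - 1)) * b k)
          - (L M - ∑ j ∈ Finset.Icc 1 M, r j) * b (M + 1) := by
  intro M
  induction M with
  | zero => intro _; simp [hL0]
  | succ M ih =>
    intro hR
    have H := ih (fun k h1 h2 => hR k h1 (le_trans h2 (Nat.le_succ M)))
    have hRM := hR (M + 1) (by omega) le_rfl
    rw [Finset.sum_Icc_succ_top (by omega : 1 ≤ M + 1)] at hRM
    rw [show ∑ k ∈ Finset.Icc 1 (M+1), r k * b k
          = (∑ k ∈ Finset.Icc 1 M, r k * b k) + r (M+1) * b (M+1) from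
        Finset.sum_Icc_succ_top (by omega) _,
      show ∑ k ∈ Finset.Icc 1 (M+1), (L k - L (k-1)) * b k
          = (∑ k ∈ Finset.Icc 1 M, (L k - L (k-1)) * b k) + (L (M+1) - L M) * b (M+1) from by
        rw [Finset.sum_Icc_succ_top (by omega)]; norm_num,
      show ∑ j ∈ Finset.Icc 1 (M+1), r j
          = (∑ j ∈ Finset.Icc 1 M, r j) + r (M+1) from Finset.sum_Icc_succ_top (by omega) _]
    have hkey : (L (M + 1) - ((∑ j ∈ Finset.Icc 1 M, r j) + r (M + 1))) * b (M + 2) ≤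
        (L (M + 1) - ((∑ j ∈ Finset.Icc 1 M, r j) + r (M + 1))) * b (M + 1) := by
      apply mul_le_mul_of_nonneg_left (hb (M + 1))
      linarith
    nlinarith [H, hkey]

/-! ### expanding the majorant-weighted sum -/

lemma delta_sum (s : ℕ) (α β γ : ℝ) (M : ℕ) (hs : 1 ≤ s) (hsM : s ≤ M) (b : ℕ → ℝ) :
    ∑ k ∈ Finset.Icc 1 M, inc s α β γ k * b k
      = α * b 1 + β * b s + γ * (∑ k ∈ Finset.Icc s M, b k)
        - γ * (∑ k ∈ Finset.Icc 1 (s - 1), b k) := by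
  have h1 : ∀ k ∈ Finset.Icc 1 M, inc s α β γ k * b k =
      (if k = 1 then α * b k else 0) + (if k = s then β * b k else 0) +
      (if s ≤ k then γ * b k else 0) - (if 1 ≤ k ∧ k ≤ s - 1 then γ * b k else 0) := by
    intro k _
    simp only [inc]
    split_ifs <;> ring
  rw [Finset.sum_congr rfl h1]
  rw [Finset.sum_sub_distrib, Finset.sum_add_distrib, Finset.sum_add_distrib]
  congr 1
  congr 1
  congr 1
  · rw [Finset.sum_ite_eq' (Finset.Icc 1 M) 1 (fun k => α * b k)]
    simp [show (1:ℕ) ≤ M from by omega]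
  · rw [Finset.sum_ite_eq' (Finset.Icc 1 M) s (fun k => β * b k)]
    simp [hs, hsM]
  · rw [← Finset.sum_filter, ← Finset.mul_sum]
    congr 1
    apply Finset.sum_congr _ (fun _ _ => rfl)
    ext k
    simp only [Finset.mem_filter, Finset.mem_Icc]
    omega
  · rw [← Finset.sum_filter, ← Finset.mul_sum]
    congr 1
    apply Finset.sum_congr _ (fun _ _ => rfl)
    ext k
    simp only [Finset.mem_filter, Finset.mem_Icc]
    omega

/-! ### The covering bound for subadditive monotone μ -/

lemma cover (μ : ℕ → ℝ) (hmono : Monotone μ) (hsub : ∀ a b, μ (a + b) ≤ μ a + μ b)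
    (hμ0 : μ 0 = 0) (u v : ℕ) :
    ∀ p q k : ℕ, k ≤ p * u + q * v → μ k ≤ p * μ u + q * μ v := by
  have hnonneg : ∀ k, 0 ≤ μ k := fun k => hμ0 ▸ hmono (Nat.zero_le k)
  intro p
  induction p with
  | zero =>
    intro q
    induction q with
    | zero => intro k hk; simp at hk; simp [hk, hμ0]
    | succ q ihq =>
      intro k hk
      rw [Nat.succ_mul] at hk
      by_cases h : k ≤ q * v
      · have h5 := ihq k (by omega)
        push_cast at h5 ⊢
        nlinarith [hnonneg v]
      · have h2 : k - v ≤ 0 * u + q * v := by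
          rw [Nat.sub_le_iff_le_add]
          calc k ≤ 0 * u + (q * v + v) := hk
            _ = 0 * u + q * v + v := by ring
        have h3 := ihq (k - v) h2
        have h4 : μ k ≤ μ (k - v) + μ v := by
          rcases le_total v k with hvk | hvk
          · calc μ k = μ ((k - v) + v) := by rw [Nat.sub_add_cancel hvk]
              _ ≤ μ (k - v) + μ v := hsub _ _
          · calc μ k ≤ μ v := hmono hvk
              _ ≤ μ (k - v) + μ v := le_add_of_nonneg_left (hnonneg _)
        push_cast at h3 ⊢
        linarith
  | succ p ihp =>
    intro q k hk
    rw [Nat.succ_mul] at hk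
    by_cases h : k ≤ p * u + q * v
    · have h5 := ihp q k h
      push_cast at h5 ⊢
      nlinarith [hnonneg u]
    · have h2 : k - u ≤ p * u + q * v := by
        rw [Nat.sub_le_iff_le_add]
        calc k ≤ p * u + u + q * v := hk
          _ = p * u + q * v + u := by ring
      have h3 := ihp q (k - u) h2
      have h4 : μ k ≤ μ (k - u) + μ u := by
        rcases le_total u k with hvk | hvk
        · calc μ k = μ ((k - u) + u) := by rw [Nat.sub_add_cancel hvk]
            _ ≤ μ (k - u) + μ u := hsub _ _
        · calc μ k ≤ μ u := hmono hvk
            _ ≤ μ (k - u) + μ u := le_add_of_nonneg_left (hnonneg _)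
      push_cast at h3 ⊢
      linarith

/-! ### The pointwise majorization lemma -/

lemma pw (μ : ℕ → ℝ) (hmono : Monotone μ) (hsub : ∀ a b, μ (a + b) ≤ μ a + μ b)
    (hμ0 : μ 0 = 0) (s : ℕ) (hs : 1 ≤ s) (γ : ℝ) (hγ0 : 0 ≤ γ)
    (hγs : γ * s ≤ μ (2 * s - 1))
    (hdisj : γ * ((s : ℝ) - 1) ≤ μ (s - 1) ∨ γ * ((s : ℝ) - 1) ≤ μ (2 * s - 1) - μ (s - 1))
    (hb3 : (2 ≤ s ∧ μ (s - 1) ≤ γ * ((s : ℝ) - 1)) ∨ μ (2 * s - 1) ≤ γ * s) :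
    ∀ k : ℕ, 1 ≤ k →
      μ k ≤ ll s (μ (s - 1) + γ * ((s : ℝ) - 1)) (μ (2 * s - 1) - γ * s) γ k := by
  intro k hk1
  set μa := μ (s - 1) with hμa
  set μb := μ (2 * s - 1) with hμb
  have hnonneg : ∀ j, 0 ≤ μ j := fun j => hμ0 ▸ hmono (Nat.zero_le j)
  have hcov := cover μ hmono hsub hμ0 (s - 1) (2 * s - 1)
  by_cases hks : k ≤ s - 1
  · -- region (a)
    rw [ll_low _ _ _ _ _ hs hk1 hks]
    have h1 : μ k ≤ μa := hmono hks
    have h2 : (k : ℝ) ≤ (s : ℝ) - 1 := by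
      have : (k : ℝ) ≤ ((s - 1 : ℕ) : ℝ) := by exact_mod_cast hks
      rwa [Nat.cast_sub hs, Nat.cast_one] at this
    nlinarith [hγ0]
  · -- k ≥ s
    have hsk : s ≤ k := by omega
    rw [ll_high _ _ _ _ _ hs hsk]
    have hform : μa + γ * ((s : ℝ) - 1) + (μb - γ * s) + γ * ((k : ℝ) + 2 - 2 * s)
        = μa + μb + γ * ((k : ℝ) + 1 - 2 * s) := by ring
    rw [hform]
    by_cases hk2 : k ≤ 2 * s - 2
    · -- region (b1)
      have hμk1 : μ k ≤ μb := hmono (by omega)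
      have hμk2 : μ k ≤ μa + μa := by
        calc μ k ≤ μ ((s - 1) + (s - 1)) := hmono (by omega)
          _ ≤ μa + μa := hsub _ _
      have hd : γ * (2 * (s:ℝ) - 1 - k) ≤ γ * ((s:ℝ) - 1) := by
        apply mul_le_mul_of_nonneg_left _ hγ0
        have : (s : ℝ) ≤ (k : ℝ) := by exact_mod_cast hsk
        linarith
      rcases hdisj with hD | hD
      · nlinarith
      · nlinarith
    · by_cases hk3 : k ≤ 3 * s - 2
      · -- region (b2)
        have h1 := hcov 1 1 k (by omega)
        push_cast at h1
        have h2 : 0 ≤ γ * ((k : ℝ) + 1 - 2 * s) := by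
          apply mul_nonneg hγ0
          have : (2 * s - 1 : ℕ) ≤ k := by omega
          have h3 : ((2 * s - 1 : ℕ) : ℝ) ≤ (k : ℝ) := by exact_mod_cast this
          rw [Nat.cast_sub (by omega), Nat.cast_mul] at h3
          push_cast at h3
          linarith
        rw [← hμa, ← hμb] at h1
        linarith
      · -- region (b3) : k ≥ 3s - 1
        have hk4 : 3 * s - 2 < k := by omega
        set T := k - (3 * s - 2) with hT
        have hT1 : 1 ≤ T := by omega
        have hTc : (T : ℝ) = (k : ℝ) - (3 * (s : ℝ) - 2) := by
          rw [hT, Nat.cast_sub (by omega : 3 * s - 2 ≤ k),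
            Nat.cast_sub (by omega : 2 ≤ 3 * s)]
          push_cast
          ring
        have hTk : ((T : ℝ) + ((s : ℝ) - 1)) = (k : ℝ) + 1 - 2 * s := by
          rw [hTc]; ring
        have hTR : (1 : ℝ) ≤ (T : ℝ) := by exact_mod_cast hT1
        have hsR : (1 : ℝ) ≤ (s : ℝ) := by exact_mod_cast hs
        rcases hb3 with ⟨hs2, hrate⟩ | hbs
        · -- use (s-1)-blocks
          set c := (T + (s - 2)) / (s - 1) with hc
          have hdm := Nat.div_add_mod (T + (s - 2)) (s - 1)
          have hmlt : (T + (s - 2)) % (s - 1) < s - 1 := Nat.mod_lt _ (by omega)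
          set P := (s - 1) * c with hP
          have hc1 : T ≤ P := by omega
          have hc2 : P ≤ T + (s - 2) := by omega
          have hcov2 : k ≤ (1 + c) * (s - 1) + 1 * (2 * s - 1) := by
            have hexp : (1 + c) * (s - 1) = (s - 1) + P := by rw [hP]; ring
            omega
          have h1 := hcov (1 + c) 1 k hcov2
          push_cast at h1
          rw [← hμa, ← hμb] at h1
          -- need : (1+c)*μa + μb ≤ μa + μb + γ*((k:ℝ)+1-2s)
          have hPc : ((P : ℕ) : ℝ) = (c : ℝ) * ((s:ℝ) - 1) := by
            rw [hP]
            push_cast [Nat.cast_sub hs]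
            ring
          have hchain : (c : ℝ) * μa ≤ γ * ((k : ℝ) + 1 - 2 * s) := by
            calc (c : ℝ) * μa ≤ (c : ℝ) * (γ * ((s:ℝ) - 1)) := by
                  apply mul_le_mul_of_nonneg_left hrate (by positivity)
              _ = γ * ((P : ℕ) : ℝ) := by rw [hPc]; ring
              _ ≤ γ * ((T : ℝ) + ((s:ℝ) - 1)) := by
                  apply mul_le_mul_of_nonneg_left _ hγ0
                  have h3 : ((P : ℕ) : ℝ) ≤ ((T + (s - 2) : ℕ) : ℝ) := by exact_mod_cast hc2
                  have h4 : ((T + (s - 2) : ℕ) : ℝ) = (T : ℝ) + ((s : ℝ) - 2) := by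
                    push_cast [Nat.cast_sub (by omega : 2 ≤ s)]
                    ring
                  rw [h4] at h3
                  linarith
              _ = γ * ((k : ℝ) + 1 - 2 * s) := by rw [hTk]
          linarith
        · -- use (2s-1)-blocks
          set c := (T + (2 * s - 2)) / (2 * s - 1) with hc
          have hdm := Nat.div_add_mod (T + (2 * s - 2)) (2 * s - 1)
          have hmlt : (T + (2 * s - 2)) % (2 * s - 1) < 2 * s - 1 := Nat.mod_lt _ (by omega)
          set P := (2 * s - 1) * c with hP
          have hc1 : T ≤ P := by omega
          have hc2 : P ≤ T + (2 * s - 2) := by omega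
          have hcov2 : k ≤ 1 * (s - 1) + (1 + c) * (2 * s - 1) := by
            have hexp : (1 + c) * (2 * s - 1) = (2 * s - 1) + P := by rw [hP]; ring
            omega
          have h1 := hcov 1 (1 + c) k hcov2
          push_cast at h1
          rw [← hμa, ← hμb] at h1
          -- key : c * s ≤ T + s - 1  (in ℝ)
          have e1R : (c : ℝ) * (2 * (s : ℝ) - 1) ≤ (T : ℝ) + (2 * (s : ℝ) - 2) := by
            have h3 : ((P : ℕ) : ℝ) ≤ ((T + (2 * s - 2) : ℕ) : ℝ) := by exact_mod_cast hc2
            have h4 : ((P : ℕ) : ℝ) = (2 * (s : ℝ) - 1) * c := by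
              rw [hP]
              push_cast [Nat.cast_sub (by omega : 1 ≤ 2 * s)]
              ring
            have h5 : ((T + (2 * s - 2) : ℕ) : ℝ) = (T : ℝ) + (2 * (s : ℝ) - 2) := by
              push_cast [Nat.cast_sub (by omega : 2 ≤ 2 * s)]
              ring
            rw [h4, h5] at h3
            linarith
          have hcsR : (c : ℝ) * s ≤ (T : ℝ) + ((s : ℝ) - 1) := by
            by_contra hcon
            push_neg at hcon
            nlinarith [mul_le_mul_of_nonneg_left e1R (by linarith : (0:ℝ) ≤ (s:ℝ)),
              mul_lt_mul_of_pos_right hcon (by linarith : (0:ℝ) < 2 * (s:ℝ) - 1),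
              mul_nonneg (by linarith : (0:ℝ) ≤ (s:ℝ) - 1) (by linarith : (0:ℝ) ≤ (T:ℝ) - 1)]
          have hchain : (c : ℝ) * μb ≤ γ * ((k : ℝ) + 1 - 2 * s) := by
            calc (c : ℝ) * μb ≤ (c : ℝ) * (γ * s) := by
                  apply mul_le_mul_of_nonneg_left hbs (by positivity)
              _ = γ * ((c : ℝ) * s) := by ring
              _ ≤ γ * ((T : ℝ) + ((s:ℝ) - 1)) := mul_le_mul_of_nonneg_left hcsR hγ0
              _ = γ * ((k : ℝ) + 1 - 2 * s) := by rw [hTk]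
          linarith

/-! ### Construction of the slope γ -/

lemma gamma_exists (μa μb : ℝ) (h0 : 0 ≤ μa) (hab : μa ≤ μb) (s : ℕ) (hs : 1 ≤ s) :
    ∃ γ : ℝ, 0 ≤ γ ∧ γ * s ≤ μb ∧
      (γ * ((s : ℝ) - 1) ≤ μa ∨ γ * ((s : ℝ) - 1) ≤ μb - μa) ∧
      ((2 ≤ s ∧ μa ≤ γ * ((s : ℝ) - 1)) ∨ μb ≤ γ * s) := by
  have hb0 : 0 ≤ μb := le_trans h0 hab
  by_cases hs1 : s = 1
  · subst hs1
    refine ⟨μb, hb0, by norm_num, Or.inl (by norm_num; exact h0), Or.inr (by norm_num)⟩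
  · have hs2 : 2 ≤ s := by omega
    have hs2R : (2 : ℝ) ≤ (s : ℝ) := by exact_mod_cast hs2
    have hsm1 : (0 : ℝ) < (s : ℝ) - 1 := by linarith
    have hsm2 : (0 : ℝ) < 2 * (s : ℝ) - 1 := by linarith
    have hspos : (0 : ℝ) < (s : ℝ) := by linarith
    by_cases hcase : (s : ℝ) * μa ≤ ((s : ℝ) - 1) * μb
    · set γ := max (μa / ((s : ℝ) - 1)) ((μb - μa) / (2 * (s : ℝ) - 1)) with hγ
      have hγ1 : μa / ((s : ℝ) - 1) ≤ γ := le_max_left _ _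
      have hγ2 : (μb - μa) / (2 * (s : ℝ) - 1) ≤ γ := le_max_right _ _
      have hγ0 : 0 ≤ γ := le_trans (div_nonneg h0 (le_of_lt hsm1)) hγ1
      refine ⟨γ, hγ0, ?_, ?_, Or.inl ⟨hs2, ?_⟩⟩
      · -- γ * s ≤ μb
        have h1 : μa / ((s : ℝ) - 1) * s ≤ μb := by
          rw [div_mul_eq_mul_div, div_le_iff₀ hsm1]
          nlinarith
        have h2 : (μb - μa) / (2 * (s : ℝ) - 1) * s ≤ μb := by
          rw [div_mul_eq_mul_div, div_le_iff₀ hsm2]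
          nlinarith
        calc γ * s = max (μa / ((s:ℝ) - 1) * s) ((μb - μa) / (2 * (s:ℝ) - 1) * s) := by
              rw [hγ, max_mul_of_nonneg _ _ (le_of_lt hspos)]
          _ ≤ μb := max_le h1 h2
      · -- the disjunction
        rcases le_total ((μb - μa) / (2 * (s : ℝ) - 1)) (μa / ((s : ℝ) - 1)) with hc | hc
        · left
          rw [hγ, max_eq_left hc, div_mul_cancel₀ _ (ne_of_gt hsm1)]
        · right
          rw [hγ, max_eq_right hc]
          rw [div_mul_eq_mul_div, div_le_iff₀ hsm2]
          nlinarith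
      · -- μa ≤ γ * (s - 1)
        calc μa = μa / ((s : ℝ) - 1) * ((s : ℝ) - 1) := by
              rw [div_mul_cancel₀ _ (ne_of_gt hsm1)]
          _ ≤ γ * ((s : ℝ) - 1) := by
              apply mul_le_mul_of_nonneg_right hγ1 (le_of_lt hsm1)
    · push_neg at hcase
      refine ⟨μb / (s : ℝ), div_nonneg hb0 (le_of_lt hspos), ?_, Or.inl ?_, Or.inr ?_⟩
      · rw [div_mul_cancel₀ _ (ne_of_gt hspos)]
      · rw [div_mul_eq_mul_div, div_le_iff₀ hspos]
        nlinarith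
      · rw [div_mul_cancel₀ _ (ne_of_gt hspos)]

/-! ### Properties of mu1 -/

section Mu1

variable {m n : ℕ} (A : Matrix (Fin m) (Fin n) ℝ)

lemma abs_G_le_one (hA : ∀ j, ∑ k, (A k j) ^ 2 = 1) (i j : Fin n) :
    |∑ k : Fin m, A k i * A k j| ≤ 1 := by
  have hcs := Finset.sum_mul_sq_le_sq_mul_sq Finset.univ (fun k => A k i) (fun k => A k j)
  rw [hA i, hA j] at hcs
  norm_num at hcs
  exact hcs

lemma mu1_bddAbove (hA : ∀ j, ∑ k, (A k j) ^ 2 = 1) (t : ℕ) :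
    BddAbove {r : ℝ | ∃ S : Finset (Fin n), S.card ≤ t ∧ ∃ i : Fin n, i ∉ S ∧
      r = ∑ j ∈ S, |∑ k : Fin m, A k i * A k j|} := by
  refine ⟨(t : ℝ), ?_⟩
  rintro r ⟨S, hS, i, hi, rfl⟩
  calc ∑ j ∈ S, |∑ k : Fin m, A k i * A k j| ≤ ∑ _j ∈ S, (1 : ℝ) :=
        Finset.sum_le_sum (fun j _ => abs_G_le_one A hA i j)
    _ = (S.card : ℝ) := by simp
    _ ≤ (t : ℝ) := by exact_mod_cast hS

lemma mu1_set_nonempty (hn : 0 < n) (t : ℕ) :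
    Set.Nonempty {r : ℝ | ∃ S : Finset (Fin n), S.card ≤ t ∧ ∃ i : Fin n, i ∉ S ∧
      r = ∑ j ∈ S, |∑ k : Fin m, A k i * A k j|} := by
  refine ⟨0, ∅, by simp, ⟨⟨0, hn⟩, by simp⟩⟩

lemma sum_abs_le_mu1 (hA : ∀ j, ∑ k, (A k j) ^ 2 = 1) (t : ℕ) (V : Finset (Fin n))
    (i : Fin n) (hi : i ∉ V) (hV : V.card ≤ t) :
    ∑ j ∈ V, |∑ k : Fin m, A k i * A k j| ≤ mu1 A t :=
  le_csSup (mu1_bddAbove A hA t) ⟨V, hV, i, hi, rfl⟩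

lemma mu1_nonneg (hA : ∀ j, ∑ k, (A k j) ^ 2 = 1) (hn : 0 < n) (t : ℕ) :
    0 ≤ mu1 A t := by
  have h := sum_abs_le_mu1 A hA t ∅ ⟨0, hn⟩ (by simp) (by simp)
  simpa using h

lemma mu1_zero (hA : ∀ j, ∑ k, (A k j) ^ 2 = 1) (hn : 0 < n) : mu1 A 0 = 0 := by
  refine le_antisymm ?_ (mu1_nonneg A hA hn 0)
  apply csSup_le (mu1_set_nonempty A hn 0)
  rintro r ⟨S, hS, i, hi, rfl⟩
  rw [Finset.card_eq_zero.mp (Nat.le_zero.mp hS)]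
  simp

lemma mu1_mono (hA : ∀ j, ∑ k, (A k j) ^ 2 = 1) (hn : 0 < n) :
    Monotone (mu1 A) := by
  intro a c hac
  apply csSup_le (mu1_set_nonempty A hn a)
  rintro r ⟨S, hS, i, hi, rfl⟩
  exact sum_abs_le_mu1 A hA c S i hi (le_trans hS hac)

lemma mu1_subadd (hA : ∀ j, ∑ k, (A k j) ^ 2 = 1) (hn : 0 < n) (a c : ℕ) :
    mu1 A (a + c) ≤ mu1 A a + mu1 A c := by
  apply csSup_le (mu1_set_nonempty A hn (a + c))
  rintro r ⟨S, hS, i, hi, rfl⟩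
  obtain ⟨S₁, hS₁sub, hS₁card⟩ := Finset.exists_subset_card_eq (s := S) (min_le_right a S.card)
  have hsplit : ∑ j ∈ S, |∑ k : Fin m, A k i * A k j|
      = (∑ j ∈ S \ S₁, |∑ k : Fin m, A k i * A k j|)
        + ∑ j ∈ S₁, |∑ k : Fin m, A k i * A k j| :=
    (Finset.sum_sdiff hS₁sub).symm
  rw [hsplit]
  have h1 : ∑ j ∈ S₁, |∑ k : Fin m, A k i * A k j| ≤ mu1 A a :=
    sum_abs_le_mu1 A hA a S₁ i (fun hmem => hi (hS₁sub hmem))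
      (by rw [hS₁card]; exact min_le_left _ _)
  have h2 : ∑ j ∈ S \ S₁, |∑ k : Fin m, A k i * A k j| ≤ mu1 A c := by
    apply sum_abs_le_mu1 A hA c _ i (fun hmem => hi (Finset.sdiff_subset hmem))
    rw [Finset.card_sdiff_of_subset hS₁sub, hS₁card]
    omega
  linarith

end Mu1

end Stmt17Aux

/-- Error bound for the Dantzig selector under the cumulative coherence condition
`μ₁(s−1) + μ₁(2s−1) < 1` (the case `a = s`, `C_{a,s} = 1`).
Here `S` is any set of indices of the `s` largest-magnitude entries of `x`, so that
`‖x_{−max(s)}‖₁ = ∑_{j ∉ S} |x j|`; in particular every `s`-sparse signal is stably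
recovered under `μ₁(s−1) + μ₁(2s−1) < 1`. -/
theorem stmt17 {m n : ℕ} (A : Matrix (Fin m) (Fin n) ℝ)
    (hA : ∀ j, ∑ k, (A k j) ^ 2 = 1)
    (s : ℕ) (hs1 : 1 ≤ s) (hsn : 2 * s - 1 ≤ n - 1)
    (hcond : mu1 A (s - 1) + mu1 A (2 * s - 1) < 1)
    (η : ℝ) (hη : 0 ≤ η)
    (x : Fin n → ℝ) (z : Fin m → ℝ) (b : Fin m → ℝ)
    (hb : b = A.mulVec x + z)
    (hz : ∀ i, |A.transpose.mulVec z i| ≤ η)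
    (xh : Fin n → ℝ)
    (hfeas : ∀ i, |A.transpose.mulVec (b - A.mulVec xh) i| ≤ η)
    (hmin : ∀ y : Fin n → ℝ, (∀ i, |A.transpose.mulVec (b - A.mulVec y) i| ≤ η) →
      ∑ i, |xh i| ≤ ∑ i, |y i|)
    (S : Finset (Fin n)) (hScard : S.card = s)
    (hSmax : ∀ i ∈ S, ∀ j ∉ S, |x j| ≤ |x i|) :
    Real.sqrt (∑ i, (xh i - x i) ^ 2) ≤
      2 * Real.sqrt 2 * Real.sqrt s / (1 - mu1 A (s - 1) - mu1 A (2 * s - 1)) * η +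
      (Real.sqrt 2 * mu1 A (2 * s - 1) / (1 - mu1 A (s - 1) - mu1 A (2 * s - 1)) + 1) *
        (2 * (∑ j ∈ Sᶜ, |x j|) / Real.sqrt s) := by
  classical
  obtain ⟨j0, hj0⟩ : S.Nonempty := Finset.card_pos.mp (by omega)
  have hn : 0 < n := j0.pos
  have hs2n : 2 * s ≤ n := by omega
  set μa := mu1 A (s - 1) with hμa
  set μb := mu1 A (2 * s - 1) with hμb
  have hμa0 : 0 ≤ μa := Stmt17Aux.mu1_nonneg A hA hn _
  have hμab : μa ≤ μb := Stmt17Aux.mu1_mono A hA hn (by omega)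
  have hD : 0 < 1 - μa - μb := by linarith only [hcond]
  set h : Fin n → ℝ := fun i => xh i - x i with hh
  set G : Fin n → Fin n → ℝ := fun i j => ∑ k, A k i * A k j with hG
  have hGii : ∀ i, G i i = 1 := by
    intro i
    simp only [hG]
    rw [← hA i]
    exact Finset.sum_congr rfl fun k _ => by ring
  -- residual bound ‖G h‖∞ ≤ 2η
  have hw : ∀ i, |∑ j, G i j * h j| ≤ 2 * η := by
    intro i
    have hAh : ∀ k, (A.mulVec xh) k - (A.mulVec x) k = ∑ j, A k j * h j := by
      intro k
      simp only [Matrix.mulVec, dotProduct, hh]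
      rw [← Finset.sum_sub_distrib]
      exact Finset.sum_congr rfl fun j _ => by ring
    have hswap : ∑ j, G i j * h j = ∑ k, A k i * ((A.mulVec xh) k - (A.mulVec x) k) := by
      simp only [hG, Finset.sum_mul]
      rw [Finset.sum_comm]
      refine Finset.sum_congr rfl fun k _ => ?_
      rw [hAh k, Finset.mul_sum]
      exact Finset.sum_congr rfl fun j _ => by ring
    have hzz : ∀ k, (A.mulVec xh) k - (A.mulVec x) k = z k - (b - A.mulVec xh) k := by
      intro k
      have hbk : b k = (A.mulVec x) k + z k := by rw [hb]; rfl
      simp only [Pi.sub_apply, hbk]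
      ring
    have htr : ∀ v : Fin m → ℝ, (A.transpose.mulVec v) i = ∑ k, A k i * v k := by
      intro v
      simp [Matrix.mulVec, dotProduct, Matrix.transpose_apply]
    calc |∑ j, G i j * h j|
        = |(A.transpose.mulVec z) i - (A.transpose.mulVec (b - A.mulVec xh)) i| := by
          rw [hswap, htr, htr, ← Finset.sum_sub_distrib]
          congr 1
          refine Finset.sum_congr rfl fun k _ => ?_
          rw [hzz k]
          ring
      _ ≤ |(A.transpose.mulVec z) i| + |(A.transpose.mulVec (b - A.mulVec xh)) i| :=
          abs_sub _ _
      _ ≤ 2 * η := by linarith only [hz i, hfeas i]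
  -- pointwise identity
  have hpoint : ∀ i, |h i| ≤ 2 * η + ∑ j ∈ Finset.univ.erase i, |G i j| * |h j| := by
    intro i
    have hsplit : G i i * h i + ∑ j ∈ Finset.univ.erase i, G i j * h j
        = ∑ j, G i j * h j :=
      Finset.add_sum_erase Finset.univ (fun j => G i j * h j) (Finset.mem_univ i)
    have h1 : h i = (∑ j, G i j * h j) - ∑ j ∈ Finset.univ.erase i, G i j * h j := by
      rw [← hsplit, hGii i]
      ring
    calc |h i| ≤ |∑ j, G i j * h j| + |∑ j ∈ Finset.univ.erase i, G i j * h j| := by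
          rw [h1]; exact abs_sub _ _
      _ ≤ 2 * η + ∑ j ∈ Finset.univ.erase i, |G i j| * |h j| := by
          refine add_le_add (hw i) ?_
          calc |∑ j ∈ Finset.univ.erase i, G i j * h j|
              ≤ ∑ j ∈ Finset.univ.erase i, |G i j * h j| := Finset.abs_sum_le_sum_abs _ _
            _ = ∑ j ∈ Finset.univ.erase i, |G i j| * |h j| :=
                Finset.sum_congr rfl fun j _ => abs_mul _ _
  -- cone constraint
  set ε := ∑ j ∈ Sᶜ, |x j| with hε
  have hε0 : 0 ≤ ε := Finset.sum_nonneg fun j _ => abs_nonneg _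
  have hxfeas : ∀ i, |A.transpose.mulVec (b - A.mulVec x) i| ≤ η := by
    intro i
    have hbz : b - A.mulVec x = z := by
      funext k
      simp [hb]
    rw [hbz]
    exact hz i
  have hl1min : ∑ i, |xh i| ≤ ∑ i, |x i| := hmin x hxfeas
  have hcone : ∑ j ∈ Sᶜ, |h j| ≤ (∑ j ∈ S, |h j|) + 2 * ε := by
    have hxh : ∀ j, xh j = x j + h j := by intro j; simp [hh]
    have hS1 : ∑ j ∈ S, (|x j| - |h j|) ≤ ∑ j ∈ S, |xh j| := by
      refine Finset.sum_le_sum fun j _ => ?_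
      rw [hxh j]
      have h2 : |x j| ≤ |x j + h j| + |h j| := by
        calc |x j| = |(x j + h j) - h j| := by ring_nf
          _ ≤ |x j + h j| + |h j| := abs_sub _ _
      linarith
    have hS2 : ∑ j ∈ Sᶜ, (|h j| - |x j|) ≤ ∑ j ∈ Sᶜ, |xh j| := by
      refine Finset.sum_le_sum fun j _ => ?_
      rw [hxh j]
      have h2 : |h j| ≤ |x j + h j| + |x j| := by
        calc |h j| = |(x j + h j) - x j| := by ring_nf
          _ ≤ |x j + h j| + |x j| := abs_sub _ _
      linarith
    have hx1 : (∑ j ∈ S, |xh j|) + ∑ j ∈ Sᶜ, |xh j| = ∑ j, |xh j| :=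
      Finset.sum_add_sum_compl S _
    have hx2 : (∑ j ∈ S, |x j|) + ∑ j ∈ Sᶜ, |x j| = ∑ j, |x j| :=
      Finset.sum_add_sum_compl S _
    rw [Finset.sum_sub_distrib] at hS1 hS2
    linarith only [hl1min, hS1, hS2, hx1, hx2]
  -- sorting
  set σp := Tuple.sort (fun i : Fin n => -|h i|) with hσp
  have hmon := Tuple.monotone_sort (fun i : Fin n => -|h i|)
  set bb : ℕ → ℝ := fun k => if hk : k < n then |h (σp ⟨k, hk⟩)| else 0 with hbb
  have hbb0 : ∀ k, 0 ≤ bb k := by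
    intro k
    simp only [hbb]
    split
    · exact abs_nonneg _
    · exact le_refl 0
  have hbbanti : ∀ k, bb (k + 1) ≤ bb k := by
    intro k
    by_cases h1 : k + 1 < n
    · have h2 : k < n := by omega
      simp only [hbb]
      rw [dif_pos h1, dif_pos h2]
      have h3 := hmon (show (⟨k, h2⟩ : Fin n) ≤ ⟨k + 1, h1⟩ from
        Fin.mk_le_mk.mpr (Nat.le_succ k))
      simp only [Function.comp_apply] at h3
      linarith only [h3]
    · simp only [hbb]
      rw [dif_neg h1]
      split
      · exact abs_nonneg _
      · exact le_refl 0
  have hanti : Antitone bb := antitone_nat_of_succ_le hbbanti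
  have hbbeval : ∀ i : Fin n, bb ((σp.symm i : Fin n) : ℕ) = |h i| := by
    intro i
    simp only [hbb]
    rw [dif_pos (σp.symm i).isLt]
    congr 1
    rw [Fin.eta, Equiv.apply_symm_apply]
  have hM : ∀ i, |h i| ≤ bb 0 := by
    intro i
    rw [← hbbeval i]
    exact hanti (Nat.zero_le _)
  have hMk : ∀ k, bb k ≤ bb 0 := fun k => hanti (Nat.zero_le _)
  have hM0 : 0 ≤ bb 0 := hbb0 0
  set istar : Fin n := σp ⟨0, hn⟩ with histar
  have hMistar : |h istar| = bb 0 := by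
    simp only [hbb, histar]
    rw [dif_pos hn]
  -- reindexing
  have hsum_reindex : ∀ F : Fin n → ℝ,
      ∑ k ∈ Finset.range n, (if hk : k < n then F (σp ⟨k, hk⟩) else 0) = ∑ i, F i := by
    intro F
    rw [← Fin.sum_univ_eq_sum_range (fun k => if hk : k < n then F (σp ⟨k, hk⟩) else 0) n]
    have heq : ∀ i : Fin n, (if hk : (i : ℕ) < n then F (σp ⟨i, hk⟩) else 0) = F (σp i) := by
      intro i
      rw [dif_pos i.isLt, Fin.eta]
    rw [Finset.sum_congr rfl fun i _ => heq i]
    exact Equiv.sum_comp σp F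
  have hbbsum : ∑ k ∈ Finset.range n, bb k = ∑ i, |h i| := hsum_reindex (fun i => |h i|)
  -- top-s sums dominate
  have htop : ∀ T : Finset (Fin n), T.card ≤ s →
      ∑ i ∈ T, |h i| ≤ ∑ k ∈ Finset.range s, bb k := by
    intro T hT
    set T' := T.image (fun i => ((σp.symm i : Fin n) : ℕ)) with hT'
    have hinj : ∀ a ∈ T, ∀ c ∈ T, ((σp.symm a : Fin n) : ℕ) = ((σp.symm c : Fin n) : ℕ)
        → a = c := by
      intro a _ c _ hac
      have h1 : σp.symm a = σp.symm c := Fin.val_injective hac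
      exact σp.symm.injective h1
    have hcard : T'.card = T.card := Finset.card_image_of_injOn fun a ha c hc hac =>
      hinj a ha c hc hac
    have hsum : ∑ k ∈ T', bb k = ∑ i ∈ T, |h i| := by
      rw [hT', Finset.sum_image hinj]
      exact Finset.sum_congr rfl fun i _ => hbbeval i
    calc ∑ i ∈ T, |h i| = ∑ k ∈ T', bb k := hsum.symm
      _ ≤ ∑ k ∈ Finset.range T'.card, bb k :=
          Stmt17Aux.sum_finset_le_range bb hbbanti hbb0 T'
      _ ≤ ∑ k ∈ Finset.range s, bb k := by
          refine Finset.sum_le_sum_of_subset_of_nonneg ?_ fun k _ _ => hbb0 k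
          refine Finset.range_subset_range.mpr ?_
          rw [hcard]
          exact hT
  have hsumsplit : (∑ j ∈ S, |h j|) + ∑ j ∈ Sᶜ, |h j| = ∑ j, |h j| :=
    Finset.sum_add_sum_compl S _
  have hl1 : ∑ i, |h i| ≤ 2 * (∑ k ∈ Finset.range s, bb k) + 2 * ε := by
    have h1 := htop S (le_of_eq hScard)
    linarith only [hcone, hsumsplit, h1]
  -- splitting ranges
  have hrangesplit : (∑ k ∈ Finset.range s, bb k) + ∑ k ∈ Finset.Icc s (n - 1), bb k
      = ∑ k ∈ Finset.range n, bb k := by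
    rw [Finset.range_eq_Ico,
      show Finset.Icc s (n - 1) = Finset.Ico s n from by
        rw [← Finset.Ico_add_one_right_eq_Icc]; congr 1; omega]
    rw [Finset.range_eq_Ico]
    exact Finset.sum_Ico_consecutive bb (Nat.zero_le s) (by omega : s ≤ n)
  have hrange0 : (∑ k ∈ Finset.range s, bb k) = bb 0 + ∑ k ∈ Finset.Icc 1 (s - 1), bb k := by
    have e2 : Finset.Ico 1 s = Finset.Icc 1 (s - 1) := by
      rw [← Finset.Ico_add_one_right_eq_Icc]
      congr 1
      omega
    rw [Finset.range_eq_Ico,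
      ← Finset.sum_Ico_consecutive _ (Nat.zero_le 1) (by omega : 1 ≤ s), e2,
      Nat.Ico_zero_eq_range, Finset.range_one, Finset.sum_singleton]
  have hconeb : ∑ k ∈ Finset.Icc s (n - 1), bb k
      ≤ bb 0 + (∑ k ∈ Finset.Icc 1 (s - 1), bb k) + 2 * ε := by
    linarith only [hl1, hrangesplit, hrange0, hbbsum]
  -- the interaction sum
  set rr : ℕ → ℝ := fun k => if hk : k < n then |G istar (σp ⟨k, hk⟩)| else 0 with hrr
  have hrrsum : ∑ k ∈ Finset.range n, rr k * bb k = ∑ i, |G istar i| * |h i| := by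
    rw [← hsum_reindex (fun i => |G istar i| * |h i|)]
    refine Finset.sum_congr rfl fun k hk => ?_
    rw [Finset.mem_range] at hk
    simp only [hrr, hbb]
    rw [dif_pos hk, dif_pos hk, dif_pos hk]
  have hsplit0 : rr 0 * bb 0 + ∑ k ∈ Finset.Icc 1 (n - 1), rr k * bb k
      = ∑ k ∈ Finset.range n, rr k * bb k := by
    have e2 : Finset.Ico 1 n = Finset.Icc 1 (n - 1) := by
      rw [← Finset.Ico_add_one_right_eq_Icc]
      congr 1
      omega
    rw [Finset.range_eq_Ico,
      ← Finset.sum_Ico_consecutive _ (Nat.zero_le 1) (by omega : 1 ≤ n), e2,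
      Nat.Ico_zero_eq_range, Finset.range_one, Finset.sum_singleton]
  have hrr0 : rr 0 = 1 := by
    simp only [hrr]
    rw [dif_pos hn]
    rw [show σp ⟨0, hn⟩ = istar from rfl, hGii istar]
    norm_num
  have hTOT : ∑ j ∈ Finset.univ.erase istar, |G istar j| * |h j|
      = ∑ k ∈ Finset.Icc 1 (n - 1), rr k * bb k := by
    have h1 : |G istar istar| * |h istar|
        + ∑ j ∈ Finset.univ.erase istar, |G istar j| * |h j|
        = ∑ i, |G istar i| * |h i| :=
      Finset.add_sum_erase Finset.univ (fun j => |G istar j| * |h j|) (Finset.mem_univ istar)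
    have h2 : |G istar istar| * |h istar| = rr 0 * bb 0 := by
      rw [hrr0, hGii istar, hMistar]
      norm_num
    linear_combination h1 - hsplit0 - h2 - hrrsum
  -- partial sums bounded by mu1
  have hpart : ∀ k, 1 ≤ k → k ≤ n - 1 → ∑ j ∈ Finset.Icc 1 k, rr j ≤ mu1 A k := by
    intro k hk1 hkn
    set gg : ℕ → Fin n := fun j => σp ⟨j % n, Nat.mod_lt j hn⟩ with hgg
    have hinj : ∀ a ∈ Finset.Icc 1 k, ∀ c ∈ Finset.Icc 1 k, gg a = gg c → a = c := by
      intro a ha c hc hac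
      rw [Finset.mem_Icc] at ha hc
      have h1 := σp.injective hac
      have h2 : a % n = c % n := congrArg Fin.val h1
      rw [Nat.mod_eq_of_lt (by omega), Nat.mod_eq_of_lt (by omega)] at h2
      exact h2
    set V := (Finset.Icc 1 k).image gg with hV
    have hcard : V.card = k := by
      rw [hV, Finset.card_image_of_injOn fun a ha c hc hac => hinj a ha c hc hac,
        Nat.card_Icc]
      omega
    have histarV : istar ∉ V := by
      rw [hV]
      intro hmem
      rw [Finset.mem_image] at hmem
      obtain ⟨j, hj, hje⟩ := hmem
      rw [Finset.mem_Icc] at hj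
      rw [histar] at hje
      have h1 := σp.injective hje
      have h2 : j % n = 0 := congrArg Fin.val h1
      rw [Nat.mod_eq_of_lt (by omega)] at h2
      omega
    have hVsum : ∑ i ∈ V, |G istar i| = ∑ j ∈ Finset.Icc 1 k, rr j := by
      rw [hV, Finset.sum_image hinj]
      refine Finset.sum_congr rfl fun j hj => ?_
      rw [Finset.mem_Icc] at hj
      have hjn : j < n := by omega
      simp only [hgg, hrr]
      rw [dif_pos hjn]
      rw [show (⟨j % n, Nat.mod_lt j hn⟩ : Fin n) = ⟨j, hjn⟩ from
        Fin.ext (Nat.mod_eq_of_lt hjn)]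
    rw [← hVsum]
    have hfin := Stmt17Aux.sum_abs_le_mu1 A hA k V istar histarV (le_of_eq hcard)
    simpa [hG] using hfin
  -- gamma and the pointwise majorant
  obtain ⟨γ, hγ0, hγs, hdisj, hb3⟩ := Stmt17Aux.gamma_exists μa μb hμa0 hμab s hs1
  set α := μa + γ * ((s : ℝ) - 1) with hα
  set β := μb - γ * (s : ℝ) with hβ
  have hsR1 : (1 : ℝ) ≤ (s : ℝ) := by exact_mod_cast hs1
  have hα0 : 0 ≤ α := by
    have h1 : 0 ≤ γ * ((s : ℝ) - 1) := mul_nonneg hγ0 (by linarith)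
    simp only [hα]
    linarith
  have hβ0 : 0 ≤ β := by
    simp only [hβ]
    linarith [hγs]
  have hpw := Stmt17Aux.pw (fun k => mu1 A k) (Stmt17Aux.mu1_mono A hA hn)
    (Stmt17Aux.mu1_subadd A hA hn) (Stmt17Aux.mu1_zero A hA hn) s hs1 γ hγ0 hγs hdisj hb3
  have hR : ∀ k, 1 ≤ k → k ≤ n - 1 →
      (∑ j ∈ Finset.Icc 1 k, rr j) ≤ Stmt17Aux.ll s α β γ k := by
    intro k hk1 hkn
    exact le_trans (hpart k hk1 hkn) (hpw k hk1)
  have habel := Stmt17Aux.abel_bound bb rr (Stmt17Aux.ll s α β γ) hbbanti hbb0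
    (Stmt17Aux.ll_zero s α β γ) (n - 1) hR
  have hbbn : bb ((n - 1) + 1) = 0 := by
    simp only [hbb]
    rw [dif_neg (by omega)]
  have hdelta : ∀ k ∈ Finset.Icc 1 (n - 1),
      (Stmt17Aux.ll s α β γ k - Stmt17Aux.ll s α β γ (k - 1)) * bb k
      = Stmt17Aux.inc s α β γ k * bb k := by
    intro k hk
    rw [Finset.mem_Icc] at hk
    rw [Stmt17Aux.ll_succ s α β γ k hk.1]
    ring
  have hsum2 := Stmt17Aux.delta_sum s α β γ (n - 1) hs1 (by omega) bb
  have hTOTbound : ∑ k ∈ Finset.Icc 1 (n - 1), rr k * bb k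
      ≤ (μa + μb) * bb 0 + 2 * γ * ε := by
    calc ∑ k ∈ Finset.Icc 1 (n - 1), rr k * bb k
        ≤ (∑ k ∈ Finset.Icc 1 (n - 1),
            (Stmt17Aux.ll s α β γ k - Stmt17Aux.ll s α β γ (k - 1)) * bb k)
          - (Stmt17Aux.ll s α β γ (n - 1) - ∑ j ∈ Finset.Icc 1 (n - 1), rr j)
              * bb ((n - 1) + 1) := habel
      _ = ∑ k ∈ Finset.Icc 1 (n - 1), Stmt17Aux.inc s α β γ k * bb k := by
          rw [hbbn, mul_zero, sub_zero]
          exact Finset.sum_congr rfl hdelta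
      _ = α * bb 1 + β * bb s + γ * (∑ k ∈ Finset.Icc s (n - 1), bb k)
          - γ * (∑ k ∈ Finset.Icc 1 (s - 1), bb k) := hsum2
      _ ≤ (μa + μb) * bb 0 + 2 * γ * ε := by
          have h1 : bb 1 ≤ bb 0 := hMk 1
          have h2 : bb s ≤ bb 0 := hMk s
          have h3 : γ * (∑ k ∈ Finset.Icc s (n - 1), bb k)
              - γ * (∑ k ∈ Finset.Icc 1 (s - 1), bb k) ≤ γ * (bb 0 + 2 * ε) := by
            rw [← mul_sub]
            exact mul_le_mul_of_nonneg_left (by linarith [hconeb]) hγ0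
          have h4 : α * bb 1 ≤ α * bb 0 := mul_le_mul_of_nonneg_left h1 hα0
          have h5 : β * bb s ≤ β * bb 0 := mul_le_mul_of_nonneg_left h2 hβ0
          have h6 : α * bb 0 + β * bb 0 + γ * bb 0 = (μa + μb) * bb 0 := by
            have hαβγ : α + β + γ = μa + μb := by simp only [hα, hβ]; ring
            rw [← hαβγ]
            ring
          linarith only [h3, h4, h5, h6]
  -- the crux bound
  have hcrux : (1 - μa - μb) * bb 0 ≤ 2 * η + 2 * (μb / (s : ℝ)) * ε := by
    have h1 := hpoint istar
    rw [hMistar, hTOT] at h1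
    have hspos : (0 : ℝ) < (s : ℝ) := by linarith
    have h2 : γ ≤ μb / (s : ℝ) := by
      rw [le_div_iff₀ hspos]
      exact hγs
    have h3 : 2 * γ * ε ≤ 2 * (μb / (s : ℝ)) * ε := by
      have h4 := mul_le_mul_of_nonneg_right h2 hε0
      linarith only [h4]
    linarith only [h1, hTOTbound, h3]
  -- ℓ2 bound
  have hsq : ∑ i, (h i) ^ 2 ≤ 2 * (s : ℝ) * (bb 0) ^ 2 + 2 * ε * bb 0 := by
    have h1 : ∑ i, (h i) ^ 2 ≤ bb 0 * ∑ i, |h i| := by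
      rw [Finset.mul_sum]
      refine Finset.sum_le_sum fun i _ => ?_
      calc (h i) ^ 2 = |h i| * |h i| := by rw [← sq_abs (h i), sq]
        _ ≤ bb 0 * |h i| := mul_le_mul_of_nonneg_right (hM i) (abs_nonneg _)
    have h2 : ∑ k ∈ Finset.range s, bb k ≤ (s : ℝ) * bb 0 := by
      calc ∑ k ∈ Finset.range s, bb k ≤ ∑ _k ∈ Finset.range s, bb 0 :=
            Finset.sum_le_sum fun k _ => hMk k
        _ = (s : ℝ) * bb 0 := by
            rw [Finset.sum_const, Finset.card_range, nsmul_eq_mul]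
    have h3 : ∑ i, |h i| ≤ 2 * ((s : ℝ) * bb 0) + 2 * ε := by
      linarith only [hl1, h2]
    have h4 := mul_le_mul_of_nonneg_left h3 hM0
    linarith only [h1, h4]
  -- square root manipulations
  set u := Real.sqrt (s : ℝ) with hu
  set v := Real.sqrt 2 with hv
  have hsR1 : (1 : ℝ) ≤ (s : ℝ) := by exact_mod_cast hs1
  have hu2 : u ^ 2 = (s : ℝ) := Real.sq_sqrt (by positivity)
  have hupos : 0 < u := Real.sqrt_pos.mpr (by linarith)
  have hv2 : v ^ 2 = 2 := Real.sq_sqrt (by norm_num)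
  have hv0 : 0 ≤ v := Real.sqrt_nonneg 2
  have hv1 : 1 ≤ v := by
    rw [hv, show (1 : ℝ) = Real.sqrt 1 from Real.sqrt_one.symm]
    exact Real.sqrt_le_sqrt (by norm_num)
  have hkey : Real.sqrt (∑ i, (h i) ^ 2) ≤ v * u * bb 0 + 2 * ε / u := by
    have hrhs0 : 0 ≤ v * u * bb 0 + 2 * ε / u := by positivity
    have hune : u ≠ 0 := ne_of_gt hupos
    have hexp : (v * u * bb 0 + 2 * ε / u) ^ 2
        = v ^ 2 * u ^ 2 * (bb 0) ^ 2 + 4 * v * (bb 0) * ε + 4 * ε ^ 2 / u ^ 2 := by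
      field_simp
      ring
    have h5 : ∑ i, (h i) ^ 2 ≤ (v * u * bb 0 + 2 * ε / u) ^ 2 := by
      rw [hexp, hv2, hu2]
      have h6 : 0 ≤ 4 * ε ^ 2 / (s : ℝ) := by positivity
      have h7 : bb 0 * ε ≤ v * (bb 0 * ε) :=
        le_mul_of_one_le_left (mul_nonneg hM0 hε0) hv1
      have h8 : 0 ≤ v * (bb 0 * ε) := mul_nonneg hv0 (mul_nonneg hM0 hε0)
      linarith only [hsq, h6, h7, h8]
    calc Real.sqrt (∑ i, (h i) ^ 2) ≤ Real.sqrt ((v * u * bb 0 + 2 * ε / u) ^ 2) :=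
          Real.sqrt_le_sqrt h5
      _ = v * u * bb 0 + 2 * ε / u := Real.sqrt_sq hrhs0
  have hMle : bb 0 ≤ (2 * η + 2 * (μb / (s : ℝ)) * ε) / (1 - μa - μb) := by
    rw [le_div_iff₀ hD]
    linarith only [hcrux]
  have hfin : v * u * bb 0 + 2 * ε / u
      ≤ 2 * v * u / (1 - μa - μb) * η + (v * μb / (1 - μa - μb) + 1) * (2 * ε / u) := by
    have h6 : v * u * bb 0 ≤ v * u * ((2 * η + 2 * (μb / (s : ℝ)) * ε) / (1 - μa - μb)) :=
      mul_le_mul_of_nonneg_left hMle (by positivity)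
    have h7 : v * u * ((2 * η + 2 * (μb / (s : ℝ)) * ε) / (1 - μa - μb))
        = 2 * v * u / (1 - μa - μb) * η + (v * μb / (1 - μa - μb)) * (2 * ε / u) := by
      rw [← hu2]
      field_simp
    linarith only [h6, h7]
  have hgoal : ∑ i, (xh i - x i) ^ 2 = ∑ i, (h i) ^ 2 := by
    refine Finset.sum_congr rfl fun i _ => ?_
    rw [hh]
  rw [hgoal]
  calc Real.sqrt (∑ i, (h i) ^ 2) ≤ v * u * bb 0 + 2 * ε / u := hkey
    _ ≤ 2 * v * u / (1 - μa - μb) * η + (v * μb / (1 - μa - μb) + 1) * (2 * ε / u) := hfin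
end
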